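/- arXiv:0812.2432 — 4 statements merged into one kernel-verified Lean document; each statement's English description precedes it below -/
import Mathlib

section
/- Let B be an n × N real matrix with columns B₁,…,B_N and operator norm ‖B‖ ≤ 1. Let a₁,…,a_N be independent mean-zero random variables with E[aᵢ⁴] ≤ 1. Define the random vector X = Σᵢ aᵢ Bᵢ ∈ ℝⁿ. Then E‖X‖₂² ≤ n and Var(‖X‖₂²) ≤ 3n. -/
open MeasureTheory ProbabilityTheory

/-- The ℓ² → ℓ² operator (spectral) norm of a rectangular real matrix. -/
noncomputable def opNorm {m n : ℕ} (M : Matrix (Fin m) (Fin n) ℝ) : ℝ :=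
  ‖LinearMap.toContinuousLinearMap (Matrix.toEuclideanLin M)‖

lemma aux_abs_pow_le (x : ℝ) (t : ℕ) (ht : t ≤ 4) : |x ^ t| ≤ 1 + x ^ 4 := by
  have h0 : (0:ℝ) ≤ |x| := abs_nonneg x
  have h4 : x ^ 4 = |x| ^ 4 := by rw [← abs_pow, abs_of_nonneg (by positivity)]
  rw [abs_pow, h4]
  set y := |x| with hy
  interval_cases t <;>
    nlinarith [sq_nonneg (y^2 - 1), sq_nonneg (y - 1), sq_nonneg y, sq_nonneg (y^2 - y), sq_nonneg (y*(y-1))]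

lemma aux_int_prod {Ω : Type*} [MeasureSpace Ω] [IsProbabilityMeasure (ℙ : Measure Ω)]
    {ι : Type*} {f : ι → Ω → ℝ}
    (hindep : iIndepFun f ℙ)
    (hmeas : ∀ i, Measurable (f i)) (hint : ∀ i, Integrable (f i))
    (s : Finset ι) :
    Integrable (∏ i ∈ s, f i) ∧ ∫ ω, (∏ i ∈ s, f i) ω = ∏ i ∈ s, ∫ ω, f i ω := by
  classical
  induction s using Finset.induction_on with
  | empty => exact ⟨integrable_const 1, by simp⟩
  | insert i s hi ih =>
    have hI : IndepFun (f i) (∏ j ∈ s, f j) ℙ :=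
      (hindep.indepFun_finsetProd_of_notMem hmeas hi).symm
    rw [Finset.prod_insert hi, Finset.prod_insert hi]
    refine ⟨hI.integrable_mul (hint i) ih.1, ?_⟩
    have := hI.integral_mul_eq_mul_integral (hint i).aestronglyMeasurable ih.1.aestronglyMeasurable
    simp only [Pi.mul_apply, Finset.prod_apply] at this
    simp only [Pi.mul_apply, Finset.prod_apply] at ih ⊢
    rw [this, ih.2]

lemma aux_sq_norm {k : ℕ} (x : EuclideanSpace ℝ (Fin k)) : ‖x‖ ^ 2 = ∑ i, (x i) ^ 2 := by
  rw [EuclideanSpace.norm_eq, Real.sq_sqrt (by positivity)]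
  simp [Real.norm_eq_abs, sq_abs]

lemma aux_key {n N : ℕ} (B : Matrix (Fin n) (Fin N) ℝ) (hB : opNorm B ≤ 1) (v : Fin N → ℝ) :
    ∑ j, (∑ i, B j i * v i) ^ 2 ≤ ∑ i, (v i) ^ 2 := by
  set L := LinearMap.toContinuousLinearMap (Matrix.toEuclideanLin B) with hL
  set v' : EuclideanSpace ℝ (Fin N) := (WithLp.equiv 2 _).symm v with hv'
  have h1 : ‖L v'‖ ≤ ‖v'‖ := by
    refine (L.le_opNorm v').trans ?_
    have h0 : (0:ℝ) ≤ ‖v'‖ := norm_nonneg _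
    have hn : ‖L‖ ≤ 1 := hB
    nlinarith
  have h2 : ‖L v'‖ ^ 2 ≤ ‖v'‖ ^ 2 := by
    have := norm_nonneg (L v')
    nlinarith
  rw [aux_sq_norm, aux_sq_norm] at h2
  have hLv : ∀ j, (L v') j = ∑ i, B j i * v i := by
    intro j
    show (Matrix.toEuclideanLin B v') j = _
    rw [hv', Matrix.toEuclideanLin_apply]
    simp [Matrix.mulVec, dotProduct]
  have hvj : ∀ i, v' i = v i := fun i => rfl
  calc ∑ j, (∑ i, B j i * v i) ^ 2 = ∑ j, ((L v') j) ^ 2 := by simp [hLv]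
    _ ≤ ∑ i, (v' i) ^ 2 := h2
    _ = ∑ i, (v i) ^ 2 := by simp [hvj]

lemma aux_col {n N : ℕ} (B : Matrix (Fin n) (Fin N) ℝ) (hB : opNorm B ≤ 1) (i : Fin N) :
    ∑ j, (B j i) ^ 2 ≤ 1 := by
  have h := aux_key B hB (fun i' => if i' = i then 1 else 0)
  simpa [mul_ite, Finset.sum_ite_eq'] using h

lemma aux_row {n N : ℕ} (B : Matrix (Fin n) (Fin N) ℝ) (hB : opNorm B ≤ 1) (j0 : Fin n) :
    ∑ i, (B j0 i) ^ 2 ≤ 1 := by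
  set r := ∑ i, (B j0 i) ^ 2 with hr
  have hr0 : 0 ≤ r := by positivity
  have h := aux_key B hB (B j0)
  have h2 : r ^ 2 ≤ r := by
    refine le_trans ?_ h
    have h3 : (∑ i, B j0 i * B j0 i) ^ 2 ≤ ∑ j, (∑ i, B j i * B j0 i) ^ 2 :=
      Finset.single_le_sum (f := fun j => (∑ i, B j i * B j0 i) ^ 2)
        (fun j _ => sq_nonneg _) (Finset.mem_univ j0)
    have h4 : ∑ i, B j0 i * B j0 i = r := by
      rw [hr]; exact Finset.sum_congr rfl (fun i _ => (sq (B j0 i)).symm)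
    rw [h4] at h3; exact h3
  nlinarith

lemma aux_gram {n N : ℕ} (B : Matrix (Fin n) (Fin N) ℝ) (hB : opNorm B ≤ 1) (k : Fin N) :
    ∑ i, (∑ j, B j i * B j k) ^ 2 ≤ ∑ j, (B j k) ^ 2 := by
  set u : Fin N → ℝ := fun i => ∑ j, B j i * B j k with hu
  set S := ∑ i, (u i) ^ 2 with hS
  have e1 : S = ∑ j, (∑ i, B j i * u i) * B j k := by
    rw [hS]
    calc ∑ i, (u i) ^ 2 = ∑ i, ∑ j, (B j i * u i) * B j k := by
          refine Finset.sum_congr rfl (fun i _ => ?_)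
          rw [sq, hu, Finset.mul_sum]
          exact Finset.sum_congr rfl (fun j _ => by ring)
      _ = ∑ j, ∑ i, (B j i * u i) * B j k := Finset.sum_comm
      _ = ∑ j, (∑ i, B j i * u i) * B j k := by
          exact Finset.sum_congr rfl (fun j _ => (Finset.sum_mul _ _ _).symm)
  have cs := Finset.sum_mul_sq_le_sq_mul_sq Finset.univ (fun j => ∑ i, B j i * u i) (fun j => B j k)
  have hk := aux_key B hB u
  have hckk : (0:ℝ) ≤ ∑ j, (B j k) ^ 2 := by positivity
  have h2 : S ^ 2 ≤ S * ∑ j, (B j k) ^ 2 := by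
    calc S ^ 2 = (∑ j, (∑ i, B j i * u i) * B j k) ^ 2 := by rw [e1]
      _ ≤ (∑ j, (∑ i, B j i * u i) ^ 2) * ∑ j, (B j k) ^ 2 := cs
      _ ≤ S * ∑ j, (B j k) ^ 2 := mul_le_mul_of_nonneg_right hk hckk
  have hS0 : 0 ≤ S := by positivity
  rcases eq_or_lt_of_le hS0 with h0 | h0
  · exact h0 ▸ hckk
  · exact le_of_mul_le_mul_left (by nlinarith) h0

lemma aux_sum_if {α : Type*} [Fintype α] (P : Prop) [Decidable P] (f : α → ℝ) :
    ∑ x, (if P then f x else 0) = if P then ∑ x, f x else 0 := by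
  split_ifs <;> simp

/-- For a matrix `B` with `‖B‖ ≤ 1` and independent mean-zero `aᵢ` with `E aᵢ⁴ ≤ 1`,
the vector `X = Σᵢ aᵢ Bᵢ` satisfies `E ‖X‖₂² ≤ n` and `Var(‖X‖₂²) ≤ 3n`. -/
theorem exp_var_of_random_combination {Ω : Type*} [MeasureSpace Ω]
    [IsProbabilityMeasure (ℙ : Measure Ω)]
    (n N : ℕ) (B : Matrix (Fin n) (Fin N) ℝ) (hB : opNorm B ≤ 1)
    (a : Fin N → Ω → ℝ)
    (hmeas : ∀ i, Measurable (a i))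
    (hindep : iIndepFun a ℙ)
    (hmean : ∀ i, ∫ ω, a i ω = 0)
    (hmom : ∀ i, (∫ ω, (a i ω) ^ 4) ≤ 1)
    (hint : ∀ i, Integrable (fun ω => (a i ω) ^ 4)) :
    (∫ ω, ∑ j, (∑ i, a i ω * B j i) ^ 2) ≤ n ∧
    (∫ ω, (∑ j, (∑ i, a i ω * B j i) ^ 2) ^ 2)
        - (∫ ω, ∑ j, (∑ i, a i ω * B j i) ^ 2) ^ 2 ≤ 3 * n := by
  classical
  -- moments
  set v : Fin N → ℕ → ℝ := fun p t => ∫ ω, (a p ω) ^ t with hv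
  have hintpow : ∀ p t, t ≤ 4 → Integrable fun ω => (a p ω) ^ t := by
    intro p t ht
    have hg : Integrable (fun ω => 1 + (a p ω) ^ 4) := (integrable_const 1).add (hint p)
    refine hg.mono' ((hmeas p).pow_const t).aestronglyMeasurable ?_
    exact Filter.Eventually.of_forall fun ω => by
      simpa [Real.norm_eq_abs] using aux_abs_pow_le (a p ω) t ht
  have hv0 : ∀ p, v p 0 = 1 := fun p => by simp [hv]
  have hv1 : ∀ p, v p 1 = 0 := fun p => by simpa [hv] using hmean p
  have hv2n : ∀ p, 0 ≤ v p 2 := fun p => integral_nonneg fun ω => by positivity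
  have hv4 : ∀ p, v p 4 ≤ 1 := fun p => hmom p
  have hv2 : ∀ p, v p 2 ≤ 1 := by
    intro p
    have hb : ∀ ω, (a p ω) ^ 2 ≤ (1 + (a p ω) ^ 4) / 2 := fun ω => by
      nlinarith [sq_nonneg ((a p ω) ^ 2 - 1)]
    have h1 : v p 2 ≤ ∫ ω, (1 + (a p ω) ^ 4) / 2 :=
      integral_mono (hintpow p 2 (by norm_num))
        (((integrable_const 1).add (hint p)).div_const 2) hb
    rw [integral_div, integral_add (integrable_const 1) (hint p), integral_const] at h1
    have h2 := hmom p
    simp only [measure_univ, ENNReal.toReal_one, probReal_univ, smul_eq_mul, mul_one, one_smul] at h1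
    rw [hv]
    rw [hv] at h1
    linarith
  -- independent family of powers
  have hfam : ∀ e : Fin N → ℕ,
      iIndepFun (fun p => fun ω => (a p ω) ^ e p) ℙ := by
    intro e
    exact hindep.comp (fun p x => x ^ e p) (fun p => measurable_id.pow_const (e p))
  have master : ∀ e : Fin N → ℕ, (∀ p, e p ≤ 4) →
      Integrable (fun ω => ∏ p, (a p ω) ^ e p) ∧
      (∫ ω, ∏ p, (a p ω) ^ e p) = ∏ p, v p (e p) := by
    intro e he
    have h := aux_int_prod (hfam e) (fun p => (hmeas p).pow_const (e p))
      (fun p => hintpow p (e p) (he p)) Finset.univ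
    have heq : (∏ p ∈ Finset.univ, (fun p => fun ω => (a p ω) ^ e p) p)
        = fun ω => ∏ p, (a p ω) ^ e p := by
      funext ω; simp
    rw [heq] at h
    exact ⟨h.1, by rw [h.2]⟩
  -- exponent vectors
  set E4 : Fin N → Fin N → Fin N → Fin N → Fin N → ℕ :=
    fun i k l m p => (if p = i then 1 else 0) + (if p = k then 1 else 0)
      + (if p = l then 1 else 0) + (if p = m then 1 else 0) with hE4
  have hE4le : ∀ i k l m p, E4 i k l m p ≤ 4 := by
    intro i k l m p; simp only [hE4]; split_ifs <;> norm_num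
  have rep1 : ∀ (i : Fin N) ω, (∏ p, (a p ω) ^ (if p = i then 1 else 0)) = a i ω := by
    intro i ω
    have h : ∀ p, (a p ω) ^ (if p = i then 1 else 0) = if p = i then a p ω else 1 := by
      intro p; split_ifs <;> simp
    simp only [h]
    simp [Finset.prod_ite_eq']
  have rep4 : ∀ i k l m ω, a i ω * a k ω * a l ω * a m ω = ∏ p, (a p ω) ^ E4 i k l m p := by
    intro i k l m ω
    simp only [hE4, pow_add, Finset.prod_mul_distrib, rep1]
  have rep2 : ∀ i k ω, a i ω * a k ω
      = ∏ p, (a p ω) ^ ((if p = i then 1 else 0) + (if p = k then 1 else 0)) := by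
    intro i k ω
    simp only [pow_add, Finset.prod_mul_distrib, rep1]
  have int2' : ∀ i k, Integrable fun ω => a i ω * a k ω := by
    intro i k
    have h := (master (fun p => (if p = i then 1 else 0) + (if p = k then 1 else 0))
      (by intro p
          show (if p = i then 1 else 0) + (if p = k then 1 else 0) ≤ 4
          split_ifs <;> norm_num)).1
    rw [show (fun ω => a i ω * a k ω)
      = fun ω => ∏ p, (a p ω) ^ ((if p = i then 1 else 0) + (if p = k then 1 else 0))
      from funext (rep2 i k)]
    exact h
  have int4' : ∀ i k l m, Integrable fun ω => a i ω * a k ω * a l ω * a m ω := by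
    intro i k l m
    have h := (master (E4 i k l m) (hE4le i k l m)).1
    rw [show (fun ω => a i ω * a k ω * a l ω * a m ω)
      = fun ω => ∏ p, (a p ω) ^ E4 i k l m p from funext (rep4 i k l m)]
    exact h
  have hint1 : ∀ p, Integrable (a p) := by
    intro p
    have := hintpow p 1 (by norm_num)
    simpa using this
  -- pair moments
  have pairI : ∀ i k, (∫ ω, a i ω * a k ω) = if i = k then v i 2 else 0 := by
    intro i k
    by_cases h : i = k
    · subst h
      rw [if_pos rfl, hv]
      simp_rw [← sq]
    · rw [if_neg h]
      have hI : IndepFun (a i) (a k) ℙ := hindep.indepFun h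
      have h2 : (∫ ω, a i ω * a k ω) = (∫ ω, a i ω) * ∫ ω, a k ω :=
        hI.integral_fun_mul_eq_mul_integral (hint1 i).aestronglyMeasurable (hint1 k).aestronglyMeasurable
      rw [h2, hmean i, zero_mul]
  -- helper for products over small sets
  have prodv : ∀ (e : Fin N → ℕ) (s : Finset (Fin N)), (∀ p, p ∉ s → e p = 0) →
      ∏ p, v p (e p) = ∏ p ∈ s, v p (e p) := by
    intro e s h
    refine (Finset.prod_subset (Finset.subset_univ s) (fun p _ hp => ?_)).symm
    rw [h p hp, hv0]
  -- quadruple moments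
  have quadI : ∀ i k l m, (∫ ω, a i ω * a k ω * a l ω * a m ω) =
      (if i = k ∧ k = l ∧ l = m then v i 4 else 0)
    + (if i = k ∧ l = m ∧ ¬ i = l then v i 2 * v l 2 else 0)
    + (if i = l ∧ k = m ∧ ¬ i = k then v i 2 * v k 2 else 0)
    + (if i = m ∧ k = l ∧ ¬ i = k then v i 2 * v k 2 else 0) := by
    intro i k l m
    have hM : (∫ ω, a i ω * a k ω * a l ω * a m ω) = ∏ p, v p (E4 i k l m p) := by
      rw [show (fun ω => a i ω * a k ω * a l ω * a m ω)
        = fun ω => ∏ p, (a p ω) ^ E4 i k l m p from funext (rep4 i k l m)]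
      exact (master (E4 i k l m) (hE4le i k l m)).2
    rw [hM]
    by_cases hik : i = k
    · subst hik
      by_cases hil : i = l
      · subst hil
        by_cases him : i = m
        · subst him
          rw [prodv _ {i} (fun p hp => by
            simp only [Finset.mem_singleton] at hp; simp [hE4, hp])]
          rw [Finset.prod_singleton]
          have h1 : E4 i i i i i = 4 := by simp [hE4]
          rw [h1]
          simp
        · -- i = k = l ≠ m : m isolated
          rw [Finset.prod_eq_zero (Finset.mem_univ m)
            (by rw [show E4 i i i m m = 1 from by
                  simp [hE4, (Ne.symm him : m ≠ i)], hv1])]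
          simp [him]
      · by_cases hlm : l = m
        · subst hlm
          rw [prodv _ {i, l} (fun p hp => by
            simp only [Finset.mem_insert, Finset.mem_singleton, not_or] at hp
            simp [hE4, hp.1, hp.2])]
          rw [Finset.prod_pair hil]
          have h1 : E4 i i l l i = 2 := by simp [hE4, hil]
          have h2 : E4 i i l l l = 2 := by simp [hE4, (Ne.symm hil : l ≠ i)]
          rw [h1, h2]
          simp [hil]
        · -- l isolated
          rw [Finset.prod_eq_zero (Finset.mem_univ l)
            (by rw [show E4 i i l m l = 1 from by
                  simp [hE4, (Ne.symm hil : l ≠ i), hlm], hv1])]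
          simp [hil, hlm]
    · by_cases hil : i = l
      · subst hil
        by_cases hkm : k = m
        · subst hkm
          rw [prodv _ {i, k} (fun p hp => by
            simp only [Finset.mem_insert, Finset.mem_singleton, not_or] at hp
            simp [hE4, hp.1, hp.2])]
          rw [Finset.prod_pair hik]
          have h1 : E4 i k i k i = 2 := by simp [hE4, hik]
          have h2 : E4 i k i k k = 2 := by simp [hE4, (Ne.symm hik : k ≠ i)]
          rw [h1, h2]
          simp [hik]
        · -- k isolated
          rw [Finset.prod_eq_zero (Finset.mem_univ k)
            (by rw [show E4 i k i m k = 1 from by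
                  simp [hE4, (Ne.symm hik : k ≠ i), hkm], hv1])]
          simp [hik, hkm, (Ne.symm hik : k ≠ i)]
      · by_cases him : i = m
        · subst him
          by_cases hkl : k = l
          · subst hkl
            rw [prodv _ {i, k} (fun p hp => by
              simp only [Finset.mem_insert, Finset.mem_singleton, not_or] at hp
              simp [hE4, hp.1, hp.2])]
            rw [Finset.prod_pair hik]
            have h1 : E4 i k k i i = 2 := by simp [hE4, hik]
            have h2 : E4 i k k i k = 2 := by simp [hE4, (Ne.symm hik : k ≠ i)]
            rw [h1, h2]
            simp [hik, hil]
          · -- k isolated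
            rw [Finset.prod_eq_zero (Finset.mem_univ k)
              (by rw [show E4 i k l i k = 1 from by
                    simp [hE4, (Ne.symm hik : k ≠ i), hkl], hv1])]
            simp [hik, hil, hkl]
        · -- i isolated
          rw [Finset.prod_eq_zero (Finset.mem_univ i)
            (by rw [show E4 i k l m i = 1 from by simp [hE4, hik, hil, him], hv1])]
          simp [hik, hil, him]
  -- the Gram coefficients
  set c : Fin N → Fin N → ℝ := fun i k => ∑ j, B j i * B j k with hc
  have hcsymm : ∀ i k, c k i = c i k := by
    intro i k; rw [hc]
    exact Finset.sum_congr rfl fun j _ => by ring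
  have hcii0 : ∀ i, 0 ≤ c i i := fun i =>
    Finset.sum_nonneg fun j _ => mul_self_nonneg _
  have hcsq : ∀ i, c i i = ∑ j, (B j i) ^ 2 := by
    intro i; rw [hc]; exact Finset.sum_congr rfl fun j _ => (sq _).symm
  have hcii1 : ∀ i, c i i ≤ 1 := by
    intro i; rw [hcsq]; exact aux_col B hB i
  have htrace : ∑ i, c i i ≤ (n : ℝ) := by
    calc ∑ i, c i i = ∑ i, ∑ j, (B j i) ^ 2 := Finset.sum_congr rfl fun i _ => hcsq i
      _ = ∑ j, ∑ i, (B j i) ^ 2 := Finset.sum_comm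
      _ ≤ ∑ _j : Fin n, (1 : ℝ) := Finset.sum_le_sum fun j _ => aux_row B hB j
      _ = n := by simp
  have hgram : ∀ k, ∑ i, (c i k) ^ 2 ≤ c k k := by
    intro k
    rw [hcsq k]
    have := aux_gram B hB k
    calc ∑ i, (c i k) ^ 2 = ∑ i, (∑ j, B j i * B j k) ^ 2 := by rw [hc]
      _ ≤ ∑ j, (B j k) ^ 2 := this
  -- pointwise expansion
  have hZpt : ∀ ω, (∑ j, (∑ i, a i ω * B j i) ^ 2) = ∑ i, ∑ k, (a i ω * a k ω) * c i k := by
    intro ω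
    calc ∑ j, (∑ i, a i ω * B j i) ^ 2
        = ∑ j, ∑ i, ∑ k, (a i ω * B j i) * (a k ω * B j k) := by
          refine Finset.sum_congr rfl fun j _ => ?_
          rw [sq, Finset.sum_mul_sum]
      _ = ∑ i, ∑ j, ∑ k, (a i ω * B j i) * (a k ω * B j k) := Finset.sum_comm
      _ = ∑ i, ∑ k, ∑ j, (a i ω * B j i) * (a k ω * B j k) :=
          Finset.sum_congr rfl fun i _ => Finset.sum_comm
      _ = ∑ i, ∑ k, (a i ω * a k ω) * c i k := by
          refine Finset.sum_congr rfl fun i _ => Finset.sum_congr rfl fun k _ => ?_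
          rw [hc, Finset.mul_sum]
          exact Finset.sum_congr rfl fun j _ => by ring
  have intZterm : ∀ (i k : Fin N), Integrable fun ω => (a i ω * a k ω) * c i k :=
    fun i k => (int2' i k).mul_const _
  -- expectation
  have hEZ : (∫ ω, ∑ j, (∑ i, a i ω * B j i) ^ 2) = ∑ i, v i 2 * c i i := by
    calc (∫ ω, ∑ j, (∑ i, a i ω * B j i) ^ 2)
        = ∫ ω, ∑ i, ∑ k, (a i ω * a k ω) * c i k :=
          integral_congr_ae (Filter.Eventually.of_forall hZpt)
      _ = ∑ i, ∫ ω, ∑ k, (a i ω * a k ω) * c i k :=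
          integral_finset_sum _ fun i _ => integrable_finset_sum _ fun k _ => intZterm i k
      _ = ∑ i, ∑ k, ∫ ω, (a i ω * a k ω) * c i k :=
          Finset.sum_congr rfl fun i _ => integral_finset_sum _ fun k _ => intZterm i k
      _ = ∑ i, ∑ k, (if i = k then v i 2 else 0) * c i k := by
          refine Finset.sum_congr rfl fun i _ => Finset.sum_congr rfl fun k _ => ?_
          rw [integral_mul_const, pairI]
      _ = ∑ i, v i 2 * c i i := by
          refine Finset.sum_congr rfl fun i _ => ?_
          simp [ite_mul, Finset.sum_ite_eq]
  have part1 : (∫ ω, ∑ j, (∑ i, a i ω * B j i) ^ 2) ≤ (n : ℝ) := by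
    rw [hEZ]
    refine le_trans (Finset.sum_le_sum fun i _ => ?_) htrace
    exact mul_le_of_le_one_left (hcii0 i) (hv2 i)
  refine ⟨part1, ?_⟩
  -- second moment
  have intZZterm : ∀ i k l m, Integrable fun ω =>
      (a i ω * a k ω * a l ω * a m ω) * (c i k * c l m) :=
    fun i k l m => (int4' i k l m).mul_const _
  have hZZpt : ∀ ω, (∑ j, (∑ i, a i ω * B j i) ^ 2) ^ 2
      = ∑ i, ∑ k, ∑ l, ∑ m, (a i ω * a k ω * a l ω * a m ω) * (c i k * c l m) := by
    intro ω
    rw [hZpt ω, sq, Finset.sum_mul]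
    refine Finset.sum_congr rfl fun i _ => ?_
    rw [Finset.sum_mul]
    refine Finset.sum_congr rfl fun k _ => ?_
    rw [Finset.mul_sum]
    refine Finset.sum_congr rfl fun l _ => ?_
    rw [Finset.mul_sum]
    exact Finset.sum_congr rfl fun m _ => by ring
  have hEZZ : (∫ ω, (∑ j, (∑ i, a i ω * B j i) ^ 2) ^ 2)
      = ∑ i, ∑ k, ∑ l, ∑ m,
        ((if i = k ∧ k = l ∧ l = m then v i 4 else 0)
        + (if i = k ∧ l = m ∧ ¬ i = l then v i 2 * v l 2 else 0)
        + (if i = l ∧ k = m ∧ ¬ i = k then v i 2 * v k 2 else 0)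
        + (if i = m ∧ k = l ∧ ¬ i = k then v i 2 * v k 2 else 0)) * (c i k * c l m) := by
    calc (∫ ω, (∑ j, (∑ i, a i ω * B j i) ^ 2) ^ 2)
        = ∫ ω, ∑ i, ∑ k, ∑ l, ∑ m, (a i ω * a k ω * a l ω * a m ω) * (c i k * c l m) :=
          integral_congr_ae (Filter.Eventually.of_forall hZZpt)
      _ = ∑ i, ∑ k, ∑ l, ∑ m, ∫ ω, (a i ω * a k ω * a l ω * a m ω) * (c i k * c l m) := by
          rw [integral_finset_sum _ fun i _ => integrable_finset_sum _ fun k _ =>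
            integrable_finset_sum _ fun l _ => integrable_finset_sum _ fun m _ =>
            intZZterm i k l m]
          refine Finset.sum_congr rfl fun i _ => ?_
          rw [integral_finset_sum _ fun k _ => integrable_finset_sum _ fun l _ =>
            integrable_finset_sum _ fun m _ => intZZterm i k l m]
          refine Finset.sum_congr rfl fun k _ => ?_
          rw [integral_finset_sum _ fun l _ => integrable_finset_sum _ fun m _ =>
            intZZterm i k l m]
          refine Finset.sum_congr rfl fun l _ => ?_
          exact integral_finset_sum _ fun m _ => intZZterm i k l m
      _ = _ := by
          refine Finset.sum_congr rfl fun i _ => Finset.sum_congr rfl fun k _ =>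
            Finset.sum_congr rfl fun l _ => Finset.sum_congr rfl fun m _ => ?_
          rw [integral_mul_const, quadI]
  -- split into four sums
  have hsplit : (∫ ω, (∑ j, (∑ i, a i ω * B j i) ^ 2) ^ 2)
      = (∑ i, v i 4 * (c i i * c i i))
      + (∑ i, ∑ l, if ¬ i = l then (v i 2 * v l 2) * (c i i * c l l) else 0)
      + (∑ i, ∑ k, if ¬ i = k then (v i 2 * v k 2) * (c i k * c i k) else 0)
      + (∑ i, ∑ k, if ¬ i = k then (v i 2 * v k 2) * (c i k * c k i) else 0) := by
    rw [hEZZ]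
    simp only [add_mul, Finset.sum_add_distrib, ite_mul, zero_mul, ite_and,
      aux_sum_if, Finset.sum_ite_eq, Finset.mem_univ, if_true]
  -- bounds for each piece
  have bnd1 : (∑ i, v i 4 * (c i i * c i i)) ≤ (n : ℝ) := by
    refine le_trans (Finset.sum_le_sum (g := fun i => c i i) fun i _ => ?_) htrace
    have h1 : v i 4 * (c i i * c i i) ≤ 1 * (c i i * c i i) :=
      mul_le_mul_of_nonneg_right (hv4 i) (mul_nonneg (hcii0 i) (hcii0 i))
    have h2 : c i i * c i i ≤ c i i * 1 :=
      mul_le_mul_of_nonneg_left (hcii1 i) (hcii0 i)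
    nlinarith
  have bnd2 : (∑ i, ∑ l, if ¬ i = l then (v i 2 * v l 2) * (c i i * c l l) else 0)
      ≤ (∑ i, v i 2 * c i i) ^ 2 := by
    rw [sq, Finset.sum_mul_sum]
    refine Finset.sum_le_sum fun i _ => Finset.sum_le_sum fun l _ => ?_
    split_ifs with h
    · exact mul_nonneg (mul_nonneg (hv2n i) (hcii0 i)) (mul_nonneg (hv2n l) (hcii0 l))
    · exact le_of_eq (by ring)
  have bnd34 : ∀ (d : Fin N → Fin N → ℝ), (∀ i k, d i k = c i k * c i k) →
      (∑ i, ∑ k, if ¬ i = k then (v i 2 * v k 2) * d i k else 0) ≤ (n : ℝ) := by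
    intro d hd
    have step1 : (∑ i, ∑ k, if ¬ i = k then (v i 2 * v k 2) * d i k else 0)
        ≤ ∑ i, ∑ k, (c i k) ^ 2 := by
      refine Finset.sum_le_sum fun i _ => Finset.sum_le_sum fun k _ => ?_
      rw [hd]
      split_ifs with h
      · positivity
      · have h1 : (v i 2 * v k 2) * (c i k * c i k) ≤ 1 * (c i k * c i k) :=
          mul_le_mul_of_nonneg_right
            (by nlinarith [hv2 i, hv2 k, hv2n i, hv2n k]) (mul_self_nonneg _)
        nlinarith
    refine le_trans step1 ?_
    have step2 : (∑ i, ∑ k, (c i k) ^ 2) = ∑ k, ∑ i, (c i k) ^ 2 := Finset.sum_comm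
    rw [step2]
    refine le_trans (Finset.sum_le_sum fun k _ => hgram k) htrace
  have bnd3 := bnd34 (fun i k => c i k * c i k) (fun i k => rfl)
  have bnd4 : (∑ i, ∑ k, if ¬ i = k then (v i 2 * v k 2) * (c i k * c k i) else 0) ≤ (n : ℝ) := by
    have : (∑ i, ∑ k, if ¬ i = k then (v i 2 * v k 2) * (c i k * c k i) else 0)
        = ∑ i, ∑ k, if ¬ i = k then (v i 2 * v k 2) * (c i k * c i k) else 0 := by
      refine Finset.sum_congr rfl fun i _ => Finset.sum_congr rfl fun k _ => ?_
      rw [hcsymm i k]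
    rw [this]
    exact bnd34 (fun i k => c i k * c i k) (fun i k => rfl)
  rw [hsplit, hEZ]
  linarith
end

section
/- Let B be an n × N real matrix with ‖B‖ ≤ 1, and let A be an N × n random matrix with independent mean-zero entries satisfying E[a_{ij}⁴] ≤ 1. Let X₁,…,X_n ∈ ℝⁿ denote the columns of BA. Then E max_{1 ≤ j ≤ n} ‖X_j‖₂² ≤ C n for an absolute constant C. -/
open MeasureTheory ProbabilityTheory

section Aux

lemma contract {n N : ℕ} (B : Matrix (Fin n) (Fin N) ℝ) (hB : opNorm B ≤ 1)
    (x : Fin N → ℝ) :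
    ∑ k : Fin n, (∑ i : Fin N, B k i * x i) ^ 2 ≤ ∑ i : Fin N, x i ^ 2 := by
  classical
  set L := LinearMap.toContinuousLinearMap (Matrix.toEuclideanLin B)
  have hle : ‖L ((WithLp.equiv 2 (Fin N → ℝ)).symm x)‖
      ≤ 1 * ‖(WithLp.equiv 2 (Fin N → ℝ)).symm x‖ :=
    le_trans (L.le_opNorm _) (by
      have : ‖L‖ ≤ 1 := hB
      exact mul_le_mul_of_nonneg_right this (norm_nonneg _))
  rw [one_mul] at hle
  have hL : L ((WithLp.equiv 2 (Fin N → ℝ)).symm x)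
      = (WithLp.equiv 2 (Fin n → ℝ)).symm (Matrix.mulVec B x) := by
    simp [L, LinearMap.coe_toContinuousLinearMap']
  rw [hL] at hle
  have h1 : ‖(WithLp.equiv 2 (Fin n → ℝ)).symm (Matrix.mulVec B x)‖ ^ 2
      = ∑ k : Fin n, (Matrix.mulVec B x) k ^ 2 := by
    rw [EuclideanSpace.norm_eq]
    rw [Real.sq_sqrt (by positivity)]
    simp [Real.norm_eq_abs, sq_abs]
  have h2 : ‖(WithLp.equiv 2 (Fin N → ℝ)).symm x‖ ^ 2 = ∑ i : Fin N, x i ^ 2 := by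
    rw [EuclideanSpace.norm_eq]
    rw [Real.sq_sqrt (by positivity)]
    simp [Real.norm_eq_abs, sq_abs]
  have := pow_le_pow_left₀ (norm_nonneg _) hle 2
  rw [h1, h2] at this
  simpa [Matrix.mulVec, dotProduct] using this

lemma iIndepFun_precomp {Ω ι κ : Type*} [MeasurableSpace Ω] {μ : Measure Ω}
    {f : κ → Ω → ℝ} (h : iIndepFun f μ)
    (g : ι → κ) (hg : Function.Injective g) :
    iIndepFun (fun i => f (g i)) μ := by
  classical
  rw [iIndepFun_iff_measure_inter_preimage_eq_mul] at h ⊢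
  intro S sets hsets
  set sets' : κ → Set ℝ := fun k => if h : ∃ i, g i = k then sets h.choose else Set.univ
    with hsets'
  have key : ∀ i : ι, sets' (g i) = sets i := by
    intro i
    have hex : ∃ i', g i' = g i := ⟨i, rfl⟩
    rw [hsets']
    simp only [dif_pos hex]
    rw [hg hex.choose_spec]
  have hmeas : ∀ k ∈ S.image g, MeasurableSet (sets' k) := by
    intro k hk
    rcases Finset.mem_image.mp hk with ⟨i, hi, rfl⟩
    rw [key]; exact hsets i hi
  have := h (S.image g) (sets := sets') (fun k hk => hmeas k hk)
  rw [Finset.set_biInter_finset_image] at this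
  rw [Finset.prod_image (fun a _ b _ hab => hg hab)] at this
  simp only [key] at this
  exact this

lemma abs_mul_le_half (x y : ℝ) : |x * y| ≤ (x ^ 2 + y ^ 2) / 2 := by
  rw [abs_mul]
  nlinarith [sq_nonneg (|x| - |y|), sq_abs x, sq_abs y, abs_nonneg x, abs_nonneg y]

lemma abs_quad_le (a b c d : ℝ) : |a * b * c * d| ≤ (a ^ 4 + b ^ 4 + c ^ 4 + d ^ 4) / 4 := by
  have h1 : |a * b * c * d| = |(a * b) * (c * d)| := by ring_nf
  rw [h1]
  have h2 := abs_mul_le_half (a * b) (c * d)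
  nlinarith [sq_nonneg (a ^ 2 - b ^ 2), sq_nonneg (c ^ 2 - d ^ 2)]

lemma abs_pow_le (x : ℝ) (k : ℕ) (hk : k ≤ 4) : |x ^ k| ≤ 1 + x ^ 4 := by
  rw [abs_pow]
  rcases le_or_gt |x| 1 with h | h
  · have : |x| ^ k ≤ 1 := pow_le_one₀ (abs_nonneg x) h
    nlinarith [pow_nonneg (abs_nonneg x) 4, sq_abs x, sq_nonneg (x ^ 2)]
  · have h4 : |x| ^ k ≤ |x| ^ 4 := pow_le_pow_right₀ h.le hk
    have : |x| ^ 4 = x ^ 4 := by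
      rw [show (4 : ℕ) = 2 * 2 from rfl, pow_mul, pow_mul, sq_abs]
    nlinarith

variable {Ω ι : Type*} [MeasurableSpace Ω] {μ : Measure Ω} {Y : ι → Ω → ℝ}


lemma pair_int (hind : iIndepFun Y μ)
    (hmeas : ∀ i, Measurable (Y i)) {i u : ι} (hiu : i ≠ u) (e1 e2 : ℕ) :
    ∫ ω, Y i ω ^ e1 * Y u ω ^ e2 ∂μ
      = (∫ ω, Y i ω ^ e1 ∂μ) * ∫ ω, Y u ω ^ e2 ∂μ := by
  have h : IndepFun (fun ω => Y i ω ^ e1) (fun ω => Y u ω ^ e2) μ :=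
    (hind.indepFun hiu).comp (measurable_id.pow_const e1) (measurable_id.pow_const e2)
  exact h.integral_mul_eq_mul_integral ((hmeas i).pow_const e1).aestronglyMeasurable
    ((hmeas u).pow_const e2).aestronglyMeasurable

lemma triple_int [DecidableEq ι] (hind : iIndepFun Y μ)
    (hmeas : ∀ i, Measurable (Y i)) {i u v : ι} (hiu : i ≠ u) (hiv : i ≠ v) (huv : u ≠ v)
    (e1 e2 e3 : ℕ) :
    ∫ ω, Y i ω ^ e1 * Y u ω ^ e2 * Y v ω ^ e3 ∂μ
      = (∫ ω, Y i ω ^ e1 ∂μ) * (∫ ω, Y u ω ^ e2 ∂μ) * ∫ ω, Y v ω ^ e3 ∂μ := by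
  classical
  set E : ι → ℕ := fun p => if p = i then e1 else if p = u then e2 else e3 with hE
  set Z : ι → Ω → ℝ := fun p ω => Y p ω ^ E p with hZ
  have hZind : iIndepFun Z μ :=
    hind.comp (fun p x => x ^ E p) (fun p => measurable_id.pow_const (E p))
  have hZmeas : ∀ p, Measurable (Z p) := fun p => (hmeas p).pow_const (E p)
  have hvnot : v ∉ ({i, u} : Finset ι) := by simp [hiv.symm, huv.symm]
  have hID : IndepFun (∏ p ∈ ({i, u} : Finset ι), Z p) (Z v) μ :=
    hZind.indepFun_finsetProd_of_notMem hZmeas hvnot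
  have hprod : (∏ p ∈ ({i, u} : Finset ι), Z p) = fun ω => Y i ω ^ e1 * Y u ω ^ e2 := by
    rw [Finset.prod_pair hiu]
    funext ω
    simp only [Pi.mul_apply, hZ, hE, if_pos rfl, if_neg hiu.symm]
    simp
  have h1 : ∫ ω, (Y i ω ^ e1 * Y u ω ^ e2) * Z v ω ∂μ
      = (∫ ω, Y i ω ^ e1 * Y u ω ^ e2 ∂μ) * ∫ ω, Z v ω ∂μ := by
    have := hID.integral_mul_eq_mul_integral (by rw [hprod]; exact
        (((hmeas i).pow_const e1).mul ((hmeas u).pow_const e2)).aestronglyMeasurable)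
      (hZmeas v).aestronglyMeasurable
    rw [hprod] at this
    exact this
  have hZv : Z v = fun ω => Y v ω ^ e3 := by
    funext ω; simp only [hZ, hE, if_neg hiv.symm, if_neg huv.symm]
  rw [hZv] at h1
  rw [show (fun ω => Y i ω ^ e1 * Y u ω ^ e2 * Y v ω ^ e3)
    = fun ω => (Y i ω ^ e1 * Y u ω ^ e2) * Y v ω ^ e3 from rfl] at *
  rw [h1, pair_int hind hmeas hiu e1 e2]

lemma quad_int [DecidableEq ι] (hind : iIndepFun Y μ)
    (hmeas : ∀ i, Measurable (Y i)) {i u v w : ι} (hiu : i ≠ u) (hiv : i ≠ v) (hiw : i ≠ w)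
    (huv : u ≠ v) (huw : u ≠ w) (hvw : v ≠ w) :
    ∫ ω, Y i ω * Y u ω * Y v ω * Y w ω ∂μ
      = (∫ ω, Y i ω ∂μ) * (∫ ω, Y u ω ∂μ) * (∫ ω, Y v ω ∂μ) * ∫ ω, Y w ω ∂μ := by
  classical
  have hwnot : w ∉ ({i, u, v} : Finset ι) := by simp [hiw.symm, huw.symm, hvw.symm]
  have hID : IndepFun (∏ p ∈ ({i, u, v} : Finset ι), Y p) (Y w) μ :=
    hind.indepFun_finsetProd_of_notMem hmeas hwnot
  have hprod : (∏ p ∈ ({i, u, v} : Finset ι), Y p) = fun ω => Y i ω * Y u ω * Y v ω := by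
    rw [show ({i, u, v} : Finset ι) = insert i (insert u {v}) from rfl]
    rw [Finset.prod_insert (by simp [hiu, hiv]), Finset.prod_insert (by simp [huv]),
      Finset.prod_singleton]
    funext ω; simp [mul_assoc]
  have h1 : ∫ ω, (Y i ω * Y u ω * Y v ω) * Y w ω ∂μ
      = (∫ ω, Y i ω * Y u ω * Y v ω ∂μ) * ∫ ω, Y w ω ∂μ := by
    have := hID.integral_mul_eq_mul_integral (by rw [hprod]; exact
        (((hmeas i).mul (hmeas u)).mul (hmeas v)).aestronglyMeasurable)
      (hmeas w).aestronglyMeasurable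
    rw [hprod] at this
    exact this
  rw [show (fun ω => Y i ω * Y u ω * Y v ω * Y w ω)
    = fun ω => (Y i ω * Y u ω * Y v ω) * Y w ω from rfl]
  rw [h1]
  have := triple_int hind hmeas hiu hiv huv 1 1 1
  simp only [pow_one] at this
  rw [this]

lemma quad_formula [DecidableEq ι] (hind : iIndepFun Y μ)
    (hmeas : ∀ i, Measurable (Y i)) (hzero : ∀ i, ∫ ω, Y i ω ∂μ = 0) (i u v w : ι) :
    ∫ ω, Y i ω * Y u ω * Y v ω * Y w ω ∂μ =
      (if i = u ∧ v = w then (∫ ω, Y i ω ^ 2 ∂μ) * ∫ ω, Y v ω ^ 2 ∂μ else 0)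
      + (if i = v ∧ u = w then (∫ ω, Y i ω ^ 2 ∂μ) * ∫ ω, Y u ω ^ 2 ∂μ else 0)
      + (if i = w ∧ u = v then (∫ ω, Y i ω ^ 2 ∂μ) * ∫ ω, Y u ω ^ 2 ∂μ else 0)
      + (if i = u ∧ i = v ∧ i = w then (∫ ω, Y i ω ^ 4 ∂μ) - 3 * (∫ ω, Y i ω ^ 2 ∂μ) ^ 2
          else 0) := by
  classical
  by_cases hiu : i = u
  · subst hiu
    by_cases hvw : v = w
    · subst hvw
      by_cases hiv : i = v
      · -- all equal
        subst hiv
        simp only [if_pos (⟨rfl, rfl⟩ : i = i ∧ i = i), and_self]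
        rw [show (fun ω => Y i ω * Y i ω * Y i ω * Y i ω) = fun ω => Y i ω ^ 4 from
          funext fun ω => by ring]
        simp
        ring
      · -- Y i ^2 * Y v ^2, i ≠ v
        rw [show (fun ω => Y i ω * Y i ω * Y v ω * Y v ω) = fun ω => Y i ω ^ 2 * Y v ω ^ 2 from
          funext fun ω => by ring]
        rw [pair_int hind hmeas hiv 2 2]
        simp [hiv, Ne.symm hiv]
    · -- i = u, v ≠ w : Y i^2 Y v Y w
      by_cases hiv : i = v
      · -- Y i^3 Y w, i ≠ w
        subst hiv
        have hiw : i ≠ w := hvw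
        rw [show (fun ω => Y i ω * Y i ω * Y i ω * Y w ω) = fun ω => Y i ω ^ 3 * Y w ω ^ 1 from
          funext fun ω => by ring]
        rw [pair_int hind hmeas hiw 3 1]
        simp [hvw, hiw, hzero w]
      · by_cases hiw : i = w
        · -- Y i^3 Y v, i ≠ v
          subst hiw
          rw [show (fun ω => Y i ω * Y i ω * Y v ω * Y i ω) = fun ω => Y i ω ^ 3 * Y v ω ^ 1 from
            funext fun ω => by ring]
          rw [pair_int hind hmeas hiv 3 1]
          simp [hiv, hvw, Ne.symm hvw, hzero v]
        · -- i, v, w distinct : Y i^2 Y v Y w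
          rw [show (fun ω => Y i ω * Y i ω * Y v ω * Y w ω)
            = fun ω => Y i ω ^ 2 * Y v ω ^ 1 * Y w ω ^ 1 from funext fun ω => by ring]
          rw [triple_int hind hmeas hiv hiw hvw 2 1 1]
          simp [hiv, hiw, hvw, hzero w]
  · by_cases hvw : v = w
    · -- i ≠ u, v = w : Y i Y u Y v^2
      subst hvw
      by_cases hiv : i = v
      · -- Y i^3 Y u
        subst hiv
        have hui : u ≠ i := Ne.symm hiu
        rw [show (fun ω => Y i ω * Y u ω * Y i ω * Y i ω) = fun ω => Y i ω ^ 3 * Y u ω ^ 1 from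
          funext fun ω => by ring]
        rw [pair_int hind hmeas hiu 3 1]
        simp [hiu, hui, hzero u]
      · by_cases huv : u = v
        · -- Y u^3 Y i
          subst huv
          rw [show (fun ω => Y i ω * Y u ω * Y u ω * Y u ω) = fun ω => Y u ω ^ 3 * Y i ω ^ 1 from
            funext fun ω => by ring]
          rw [pair_int hind hmeas (Ne.symm hiu) 3 1]
          simp [hiu, hiv, hzero i]
        · -- i, u, v distinct : Y i Y u Y v^2
          rw [show (fun ω => Y i ω * Y u ω * Y v ω * Y v ω)
            = fun ω => Y i ω ^ 1 * Y u ω ^ 1 * Y v ω ^ 2 from funext fun ω => by ring]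
          rw [triple_int hind hmeas hiu hiv huv 1 1 2]
          simp [hiu, hiv, huv, hzero i]
    · -- i ≠ u, v ≠ w
      by_cases hiv : i = v
      · subst hiv
        by_cases huw : u = w
        · -- i=v, u=w : Y i^2 Y u^2
          subst huw
          rw [show (fun ω => Y i ω * Y u ω * Y i ω * Y u ω) = fun ω => Y i ω ^ 2 * Y u ω ^ 2 from
            funext fun ω => by ring]
          rw [pair_int hind hmeas hiu 2 2]
          simp [hiu, hvw]
        · -- i=v, u≠w, i≠u, i≠w (i=v≠w) : Y i^2 Y u Y w
          have hiw : i ≠ w := hvw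
          rw [show (fun ω => Y i ω * Y u ω * Y i ω * Y w ω)
            = fun ω => Y i ω ^ 2 * Y u ω ^ 1 * Y w ω ^ 1 from funext fun ω => by ring]
          rw [triple_int hind hmeas hiu hiw huw 2 1 1]
          simp [hiu, hiw, huw, hzero u]
      · by_cases hiw : i = w
        · subst hiw
          by_cases huv : u = v
          · -- i=w, u=v : Y i^2 Y u^2
            subst huv
            rw [show (fun ω => Y i ω * Y u ω * Y u ω * Y i ω) = fun ω => Y i ω ^ 2 * Y u ω ^ 2 from
              funext fun ω => by ring]
            rw [pair_int hind hmeas hiu 2 2]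
            simp [hiu, hiv, Ne.symm hvw]
          · -- i=w, u≠v, i≠u, i≠v : Y i^2 Y u Y v
            have hvi : v ≠ i := hvw
            rw [show (fun ω => Y i ω * Y u ω * Y v ω * Y i ω)
              = fun ω => Y i ω ^ 2 * Y u ω ^ 1 * Y v ω ^ 1 from funext fun ω => by ring]
            rw [triple_int hind hmeas hiu (Ne.symm hvi) huv 2 1 1]
            simp [hiu, hiv, huv, hzero u]
        · -- i ∉ {u,v,w}
          by_cases huv : u = v
          · -- Y i Y u^2 Y w, distinct i,u,w
            subst huv
            have huw : u ≠ w := hvw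
            rw [show (fun ω => Y i ω * Y u ω * Y u ω * Y w ω)
              = fun ω => Y i ω ^ 1 * Y u ω ^ 2 * Y w ω ^ 1 from funext fun ω => by ring]
            rw [triple_int hind hmeas hiu hiw huw 1 2 1]
            simp [hiu, hiv, hiw, hzero i]
          · by_cases huw : u = w
            · -- Y i Y u^2 Y v, distinct i,u,v
              subst huw
              rw [show (fun ω => Y i ω * Y u ω * Y v ω * Y u ω)
                = fun ω => Y i ω ^ 1 * Y u ω ^ 2 * Y v ω ^ 1 from funext fun ω => by ring]
              rw [triple_int hind hmeas hiu hiv huv 1 2 1]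
              simp [hiu, hiv, huv, hzero i]
            · -- all distinct
              rw [quad_int hind hmeas hiu hiv hiw huv huw hvw]
              simp [hiu, hiv, hiw, huv, huw, hvw, hzero i]

lemma int_quad' {Ω ι : Type*} [MeasurableSpace Ω] {μ : Measure Ω} {Y : ι → Ω → ℝ}
    (hmeas : ∀ i, Measurable (Y i)) (hint4 : ∀ i, Integrable (fun ω => Y i ω ^ 4) μ)
    (i u v w : ι) : Integrable (fun ω => Y i ω * Y u ω * Y v ω * Y w ω) μ := by
  have hg : Integrable (fun ω => (Y i ω ^ 4 + Y u ω ^ 4 + Y v ω ^ 4 + Y w ω ^ 4) / 4) μ :=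
    ((((hint4 i).add (hint4 u)).add (hint4 v)).add (hint4 w)).div_const 4
  exact Integrable.mono' hg
    ((((hmeas i).mul (hmeas u)).mul (hmeas v)).mul (hmeas w)).aestronglyMeasurable
    (ae_of_all _ fun ω => abs_quad_le _ _ _ _)

lemma int_pow' {Ω ι : Type*} [MeasurableSpace Ω] {μ : Measure Ω} {Y : ι → Ω → ℝ}
    [IsProbabilityMeasure μ]
    (hmeas : ∀ i, Measurable (Y i)) (hint4 : ∀ i, Integrable (fun ω => Y i ω ^ 4) μ)
    (i : ι) (k : ℕ) (hk : k ≤ 4) : Integrable (fun ω => Y i ω ^ k) μ := by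
  refine Integrable.mono' ((integrable_const 1).add (hint4 i))
    ((hmeas i).pow_const k).aestronglyMeasurable (ae_of_all _ fun ω => ?_)
  exact abs_pow_le _ _ hk

lemma int_pair' {Ω ι : Type*} [MeasurableSpace Ω] {μ : Measure Ω} {Y : ι → Ω → ℝ}
    [IsProbabilityMeasure μ]
    (hmeas : ∀ i, Measurable (Y i)) (hint4 : ∀ i, Integrable (fun ω => Y i ω ^ 4) μ)
    (i u : ι) : Integrable (fun ω => Y i ω * Y u ω) μ := by
  have hg : Integrable (fun ω => (Y i ω ^ 2 + Y u ω ^ 2) / 2) μ :=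
    ((int_pow' hmeas hint4 i 2 (by norm_num)).add
      (int_pow' hmeas hint4 u 2 (by norm_num))).div_const 2
  exact Integrable.mono' hg ((hmeas i).mul (hmeas u)).aestronglyMeasurable
    (ae_of_all _ fun ω => abs_mul_le_half _ _)

lemma q_nonneg' {Ω ι : Type*} [MeasurableSpace Ω] (μ : Measure Ω) (Y : ι → Ω → ℝ)
    (i : ι) : 0 ≤ ∫ ω, Y i ω ^ 2 ∂μ :=
  integral_nonneg fun _ => sq_nonneg _

lemma q_le_one' {Ω ι : Type*} [MeasurableSpace Ω] {μ : Measure Ω} {Y : ι → Ω → ℝ}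
    [IsProbabilityMeasure μ]
    (hmeas : ∀ i, Measurable (Y i)) (hint4 : ∀ i, Integrable (fun ω => Y i ω ^ 4) μ)
    (hr : ∀ i, ∫ ω, Y i ω ^ 4 ∂μ ≤ 1) (i : ι) : ∫ ω, Y i ω ^ 2 ∂μ ≤ 1 := by
  have hle : ∀ ω : Ω, Y i ω ^ 2 ≤ (1 + Y i ω ^ 4) / 2 := by
    intro ω; nlinarith [sq_nonneg (Y i ω ^ 2 - 1)]
  have h1 : ∫ ω, Y i ω ^ 2 ∂μ ≤ ∫ ω, (1 + Y i ω ^ 4) / 2 ∂μ :=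
    integral_mono (int_pow' hmeas hint4 i 2 (by norm_num))
      (((integrable_const 1).add (hint4 i)).div_const 2) hle
  have h2 : ∫ ω, (1 + Y i ω ^ 4) / 2 ∂μ = (1 + ∫ ω, Y i ω ^ 4 ∂μ) / 2 := by
    rw [integral_div, integral_add (integrable_const 1) (hint4 i), integral_const]
    simp
  rw [h2] at h1
  linarith [hr i]

variable [Fintype ι] [DecidableEq ι] {n : ℕ} {c : Fin n → ι → ℝ}


lemma row_norm_le' (hc : ∀ x : ι → ℝ, ∑ k : Fin n, (∑ i, c k i * x i) ^ 2 ≤ ∑ i, x i ^ 2)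
    (k : Fin n) : ∑ i, c k i ^ 2 ≤ 1 := by
  set s := ∑ i, c k i ^ 2 with hs
  have hs0 : 0 ≤ s := Finset.sum_nonneg fun i _ => sq_nonneg _
  have h1 : s ^ 2 ≤ s := by
    have heq : (∑ i, c k i * c k i) = s := by
      rw [hs]; exact Finset.sum_congr rfl fun i _ => by ring
    calc s ^ 2 = (∑ i, c k i * c k i) ^ 2 := by rw [heq]
      _ ≤ ∑ k' : Fin n, (∑ i, c k' i * c k i) ^ 2 :=
          Finset.single_le_sum (f := fun k' => (∑ i, c k' i * c k i) ^ 2)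
            (fun k' _ => sq_nonneg _) (Finset.mem_univ k)
      _ ≤ ∑ i, (c k i) ^ 2 := hc (c k)
      _ = s := rfl
  nlinarith

lemma diag_nonneg' (i : ι) : 0 ≤ ∑ k : Fin n, c k i * c k i :=
  Finset.sum_nonneg fun k _ => mul_self_nonneg _

lemma diag_le_one' (hc : ∀ x : ι → ℝ, ∑ k : Fin n, (∑ i, c k i * x i) ^ 2 ≤ ∑ i, x i ^ 2)
    (i : ι) : ∑ k : Fin n, c k i * c k i ≤ 1 := by
  have h := hc (fun u => if u = i then 1 else 0)
  simp only [mul_ite, mul_one, mul_zero, Finset.sum_ite_eq', Finset.mem_univ, if_true] at h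
  calc ∑ k : Fin n, c k i * c k i = ∑ k : Fin n, c k i ^ 2 :=
        Finset.sum_congr rfl fun k _ => by ring
    _ ≤ ∑ u, (if u = i then (1:ℝ) else 0) ^ 2 := h
    _ = 1 := by simp

lemma trace_le' (hc : ∀ x : ι → ℝ, ∑ k : Fin n, (∑ i, c k i * x i) ^ 2 ≤ ∑ i, x i ^ 2) :
    ∑ i, ∑ k : Fin n, c k i * c k i ≤ n := by
  rw [Finset.sum_comm]
  calc ∑ k : Fin n, ∑ i, c k i * c k i
      = ∑ k : Fin n, ∑ i, c k i ^ 2 :=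
        Finset.sum_congr rfl fun k _ => Finset.sum_congr rfl fun i _ => by ring
    _ ≤ ∑ _k : Fin n, (1:ℝ) := Finset.sum_le_sum fun k _ => row_norm_le' hc k
    _ = n := by simp

lemma frob_le' (hc : ∀ x : ι → ℝ, ∑ k : Fin n, (∑ i, c k i * x i) ^ 2 ≤ ∑ i, x i ^ 2) :
    ∑ i, ∑ u, (∑ k : Fin n, c k i * c k u) ^ 2 ≤ n := by
  have e1 : ∀ i u : ι, (∑ k : Fin n, c k i * c k u) ^ 2
      = ∑ s : Fin n × Fin n, (c s.1 i * c s.1 u) * (c s.2 i * c s.2 u) := fun i u => by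
    rw [sq, Finset.sum_mul_sum, Fintype.sum_prod_type]
  have e2 : ∀ s : Fin n × Fin n, (∑ i, c s.1 i * c s.2 i) ^ 2
      = ∑ p : ι × ι, (c s.1 p.1 * c s.2 p.1) * (c s.1 p.2 * c s.2 p.2) := fun s => by
    rw [sq, Finset.sum_mul_sum, Fintype.sum_prod_type]
  have swap : ∑ i, ∑ u, (∑ k : Fin n, c k i * c k u) ^ 2
      = ∑ k : Fin n, ∑ l : Fin n, (∑ i, c k i * c l i) ^ 2 := by
    calc ∑ i, ∑ u, (∑ k : Fin n, c k i * c k u) ^ 2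
        = ∑ p : ι × ι, (∑ k : Fin n, c k p.1 * c k p.2) ^ 2 :=
          (Fintype.sum_prod_type (f := fun p : ι × ι => (∑ k : Fin n, c k p.1 * c k p.2) ^ 2)).symm
      _ = ∑ p : ι × ι, ∑ s : Fin n × Fin n, (c s.1 p.1 * c s.1 p.2) * (c s.2 p.1 * c s.2 p.2) := by
          exact Finset.sum_congr rfl fun p _ => e1 p.1 p.2
      _ = ∑ s : Fin n × Fin n, ∑ p : ι × ι, (c s.1 p.1 * c s.1 p.2) * (c s.2 p.1 * c s.2 p.2) :=
          Finset.sum_comm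
      _ = ∑ s : Fin n × Fin n, (∑ i, c s.1 i * c s.2 i) ^ 2 := by
          refine Finset.sum_congr rfl fun s _ => ?_
          rw [e2 s]
          exact Finset.sum_congr rfl fun p _ => by ring
      _ = ∑ k : Fin n, ∑ l : Fin n, (∑ i, c k i * c l i) ^ 2 :=
          Fintype.sum_prod_type (f := fun s : Fin n × Fin n => (∑ i, c s.1 i * c s.2 i) ^ 2)
  rw [swap]
  calc ∑ k : Fin n, ∑ l : Fin n, (∑ i, c k i * c l i) ^ 2
      ≤ ∑ _k : Fin n, (1:ℝ) := by
        refine Finset.sum_le_sum fun k _ => ?_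
        calc ∑ l : Fin n, (∑ i, c k i * c l i) ^ 2
            = ∑ l : Fin n, (∑ i, c l i * c k i) ^ 2 :=
              Finset.sum_congr rfl fun l _ => by
                rw [show (∑ i, c k i * c l i) = ∑ i, c l i * c k i from
                  Finset.sum_congr rfl fun i _ => by ring]
          _ ≤ ∑ i, c k i ^ 2 := hc (c k)
          _ ≤ 1 := row_norm_le' hc k
    _ = n := by simp

set_option maxHeartbeats 2000000 in
lemma column_moments [IsProbabilityMeasure μ]
    (hind : iIndepFun Y μ) (hmeas : ∀ i, Measurable (Y i))
    (hzero : ∀ i, ∫ ω, Y i ω ∂μ = 0) (hint4 : ∀ i, Integrable (fun ω => Y i ω ^ 4) μ)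
    (hr : ∀ i, ∫ ω, Y i ω ^ 4 ∂μ ≤ 1)
    (hc : ∀ x : ι → ℝ, ∑ k : Fin n, (∑ i, c k i * x i) ^ 2 ≤ ∑ i, x i ^ 2) :
    Integrable (fun ω => ∑ k : Fin n, (∑ i, c k i * Y i ω) ^ 2) μ ∧
    Integrable (fun ω => (∑ k : Fin n, (∑ i, c k i * Y i ω) ^ 2) ^ 2) μ ∧
    (∫ ω, ∑ k : Fin n, (∑ i, c k i * Y i ω) ^ 2 ∂μ) ≤ n ∧
    (∫ ω, ((∑ k : Fin n, (∑ i, c k i * Y i ω) ^ 2)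
        - ∫ ω', ∑ k : Fin n, (∑ i, c k i * Y i ω') ^ 2 ∂μ) ^ 2 ∂μ) ≤ 3 * n := by
  classical
  set q : ι → ℝ := fun i => ∫ ω, Y i ω ^ 2 ∂μ with hq
  set M : ι × ι → ℝ := fun p => ∑ k : Fin n, c k p.1 * c k p.2 with hM
  -- pointwise expansion
  have f_expand : ∀ ω, (∑ k : Fin n, (∑ i, c k i * Y i ω) ^ 2)
      = ∑ p : ι × ι, M p * (Y p.1 ω * Y p.2 ω) := by
    intro ω
    have e1 : ∀ k : Fin n, (∑ i, c k i * Y i ω) ^ 2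
        = ∑ p : ι × ι, (c k p.1 * Y p.1 ω) * (c k p.2 * Y p.2 ω) := fun k => by
      rw [sq, Finset.sum_mul_sum, Fintype.sum_prod_type]
    calc ∑ k : Fin n, (∑ i, c k i * Y i ω) ^ 2
        = ∑ k : Fin n, ∑ p : ι × ι, (c k p.1 * Y p.1 ω) * (c k p.2 * Y p.2 ω) :=
          Finset.sum_congr rfl fun k _ => e1 k
      _ = ∑ p : ι × ι, ∑ k : Fin n, (c k p.1 * Y p.1 ω) * (c k p.2 * Y p.2 ω) :=
          Finset.sum_comm
      _ = ∑ p : ι × ι, M p * (Y p.1 ω * Y p.2 ω) := by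
          refine Finset.sum_congr rfl fun p _ => ?_
          rw [hM, Finset.sum_mul]
          exact Finset.sum_congr rfl fun k _ => by ring
  -- integrability of f
  have hfint : Integrable (fun ω => ∑ k : Fin n, (∑ i, c k i * Y i ω) ^ 2) μ := by
    rw [show (fun ω => ∑ k : Fin n, (∑ i, c k i * Y i ω) ^ 2)
      = fun ω => ∑ p : ι × ι, M p * (Y p.1 ω * Y p.2 ω) from funext f_expand]
    exact integrable_finset_sum _ fun p _ => (int_pair' hmeas hint4 p.1 p.2).const_mul _
  -- integrability of f²
  have f2_expand : ∀ ω, (∑ k : Fin n, (∑ i, c k i * Y i ω) ^ 2) ^ 2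
      = ∑ p : ι × ι, ∑ s : ι × ι,
          (M p * M s) * (Y p.1 ω * Y p.2 ω * Y s.1 ω * Y s.2 ω) := by
    intro ω
    rw [f_expand ω, sq, Finset.sum_mul_sum]
    exact Finset.sum_congr rfl fun p _ => Finset.sum_congr rfl fun s _ => by ring
  have hf2int : Integrable (fun ω => (∑ k : Fin n, (∑ i, c k i * Y i ω) ^ 2) ^ 2) μ := by
    rw [show (fun ω => (∑ k : Fin n, (∑ i, c k i * Y i ω) ^ 2) ^ 2)
      = fun ω => ∑ p : ι × ι, ∑ s : ι × ι,
          (M p * M s) * (Y p.1 ω * Y p.2 ω * Y s.1 ω * Y s.2 ω) from funext f2_expand]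
    exact integrable_finset_sum _ fun p _ => integrable_finset_sum _ fun s _ =>
      (int_quad' hmeas hint4 p.1 p.2 s.1 s.2).const_mul _
  -- pair expectations
  have pairE : ∀ i u : ι, ∫ ω, Y i ω * Y u ω ∂μ = if i = u then q i else 0 := by
    intro i u
    by_cases hiu : i = u
    · subst hiu
      rw [if_pos rfl, hq]
      congr 1; funext ω; ring
    · rw [if_neg hiu]
      have h := pair_int hind hmeas hiu 1 1
      simp only [pow_one] at h
      rw [h, hzero i, zero_mul]
  -- expectation of f
  have hEf : (∫ ω, ∑ k : Fin n, (∑ i, c k i * Y i ω) ^ 2 ∂μ)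
      = ∑ p : ι × ι, M p * (if p.1 = p.2 then q p.1 else 0) := by
    rw [show (fun ω => ∑ k : Fin n, (∑ i, c k i * Y i ω) ^ 2)
      = fun ω => ∑ p : ι × ι, M p * (Y p.1 ω * Y p.2 ω) from funext f_expand]
    rw [integral_finset_sum _ fun p _ => (int_pair' hmeas hint4 p.1 p.2).const_mul _]
    refine Finset.sum_congr rfl fun p _ => ?_
    rw [integral_const_mul, pairE]
  have hEf_diag : (∫ ω, ∑ k : Fin n, (∑ i, c k i * Y i ω) ^ 2 ∂μ)
      = ∑ i, M (i, i) * q i := by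
    rw [hEf, Fintype.sum_prod_type]
    refine Finset.sum_congr rfl fun i _ => ?_
    rw [Finset.sum_eq_single i (fun u _ hui => by rw [if_neg (fun h => hui h.symm), mul_zero])
      (fun h => absurd (Finset.mem_univ i) h)]
    rw [if_pos rfl]
  have hEf_le : (∫ ω, ∑ k : Fin n, (∑ i, c k i * Y i ω) ^ 2 ∂μ) ≤ n := by
    rw [hEf_diag]
    calc ∑ i, M (i, i) * q i ≤ ∑ i, M (i, i) := by
          refine Finset.sum_le_sum fun i _ => ?_
          have h1 : 0 ≤ M (i, i) := diag_nonneg' i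
          have h2 : q i ≤ 1 := q_le_one' hmeas hint4 hr i
          nlinarith
      _ ≤ n := trace_le' hc
  refine ⟨hfint, hf2int, hEf_le, ?_⟩
  set m : ℝ := ∫ ω, ∑ k : Fin n, (∑ i, c k i * Y i ω) ^ 2 ∂μ with hm
  -- second moment
  have hEf2 : (∫ ω, (∑ k : Fin n, (∑ i, c k i * Y i ω) ^ 2) ^ 2 ∂μ)
      = ∑ p : ι × ι, ∑ s : ι × ι,
          (M p * M s) * ∫ ω, Y p.1 ω * Y p.2 ω * Y s.1 ω * Y s.2 ω ∂μ := by
    rw [show (fun ω => (∑ k : Fin n, (∑ i, c k i * Y i ω) ^ 2) ^ 2)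
      = fun ω => ∑ p : ι × ι, ∑ s : ι × ι,
          (M p * M s) * (Y p.1 ω * Y p.2 ω * Y s.1 ω * Y s.2 ω) from funext f2_expand]
    rw [integral_finset_sum _ fun p _ => integrable_finset_sum _ fun s _ =>
      (int_quad' hmeas hint4 p.1 p.2 s.1 s.2).const_mul _]
    refine Finset.sum_congr rfl fun p _ => ?_
    rw [integral_finset_sum _ fun s _ => (int_quad' hmeas hint4 p.1 p.2 s.1 s.2).const_mul _]
    exact Finset.sum_congr rfl fun s _ => integral_const_mul _ _
  have split : ∀ p s : ι × ι,
      (M p * M s) * (∫ ω, Y p.1 ω * Y p.2 ω * Y s.1 ω * Y s.2 ω ∂μ)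
      = (if p.1 = p.2 then M p * ∫ ω, Y p.1 ω ^ 2 ∂μ else 0)
          * (if s.1 = s.2 then M s * ∫ ω, Y s.1 ω ^ 2 ∂μ else 0)
        + (if p.1 = s.1 ∧ p.2 = s.2 then
            M p * M s * ((∫ ω, Y p.1 ω ^ 2 ∂μ) * ∫ ω, Y p.2 ω ^ 2 ∂μ) else 0)
        + (if p.1 = s.2 ∧ p.2 = s.1 then
            M p * M s * ((∫ ω, Y p.1 ω ^ 2 ∂μ) * ∫ ω, Y p.2 ω ^ 2 ∂μ) else 0)
        + (if p.1 = p.2 ∧ p.1 = s.1 ∧ p.1 = s.2 then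
            M p * M s * ((∫ ω, Y p.1 ω ^ 4 ∂μ) - 3 * (∫ ω, Y p.1 ω ^ 2 ∂μ) ^ 2) else 0) := by
    intro p s
    rw [quad_formula hind hmeas hzero p.1 p.2 s.1 s.2]
    have e1 : M p * M s * (if p.1 = p.2 ∧ s.1 = s.2 then
          (∫ ω, Y p.1 ω ^ 2 ∂μ) * ∫ ω, Y s.1 ω ^ 2 ∂μ else 0)
        = (if p.1 = p.2 then M p * ∫ ω, Y p.1 ω ^ 2 ∂μ else 0)
          * (if s.1 = s.2 then M s * ∫ ω, Y s.1 ω ^ 2 ∂μ else 0) := by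
      by_cases h1 : p.1 = p.2 <;> by_cases h2 : s.1 = s.2 <;> simp [h1, h2] <;> ring
    rw [mul_add, mul_add, mul_add]
    refine congrArg₂ HAdd.hAdd (congrArg₂ HAdd.hAdd (congrArg₂ HAdd.hAdd e1 ?_) ?_) ?_ <;>
      rw [mul_ite, mul_zero]
  have hEf2' : (∫ ω, (∑ k : Fin n, (∑ i, c k i * Y i ω) ^ 2) ^ 2 ∂μ)
      = (∑ p : ι × ι, ∑ s : ι × ι, (if p.1 = p.2 then M p * ∫ ω, Y p.1 ω ^ 2 ∂μ else 0)
            * (if s.1 = s.2 then M s * ∫ ω, Y s.1 ω ^ 2 ∂μ else 0))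
        + (∑ p : ι × ι, ∑ s : ι × ι, (if p.1 = s.1 ∧ p.2 = s.2 then
            M p * M s * ((∫ ω, Y p.1 ω ^ 2 ∂μ) * ∫ ω, Y p.2 ω ^ 2 ∂μ) else 0))
        + (∑ p : ι × ι, ∑ s : ι × ι, (if p.1 = s.2 ∧ p.2 = s.1 then
            M p * M s * ((∫ ω, Y p.1 ω ^ 2 ∂μ) * ∫ ω, Y p.2 ω ^ 2 ∂μ) else 0))
        + (∑ p : ι × ι, ∑ s : ι × ι, (if p.1 = p.2 ∧ p.1 = s.1 ∧ p.1 = s.2 then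
            M p * M s * ((∫ ω, Y p.1 ω ^ 4 ∂μ) - 3 * (∫ ω, Y p.1 ω ^ 2 ∂μ) ^ 2) else 0)) := by
    rw [hEf2]
    rw [show (∑ p : ι × ι, ∑ s : ι × ι,
        (M p * M s) * ∫ ω, Y p.1 ω * Y p.2 ω * Y s.1 ω * Y s.2 ω ∂μ)
      = ∑ p : ι × ι, ∑ s : ι × ι, ((if p.1 = p.2 then M p * ∫ ω, Y p.1 ω ^ 2 ∂μ else 0)
            * (if s.1 = s.2 then M s * ∫ ω, Y s.1 ω ^ 2 ∂μ else 0)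
        + (if p.1 = s.1 ∧ p.2 = s.2 then
            M p * M s * ((∫ ω, Y p.1 ω ^ 2 ∂μ) * ∫ ω, Y p.2 ω ^ 2 ∂μ) else 0)
        + (if p.1 = s.2 ∧ p.2 = s.1 then
            M p * M s * ((∫ ω, Y p.1 ω ^ 2 ∂μ) * ∫ ω, Y p.2 ω ^ 2 ∂μ) else 0)
        + (if p.1 = p.2 ∧ p.1 = s.1 ∧ p.1 = s.2 then
            M p * M s * ((∫ ω, Y p.1 ω ^ 4 ∂μ) - 3 * (∫ ω, Y p.1 ω ^ 2 ∂μ) ^ 2) else 0)) from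
      Finset.sum_congr rfl fun p _ => Finset.sum_congr rfl fun s _ => split p s]
    simp only [Finset.sum_add_distrib]
  -- S1 = m^2
  have hS1 : (∑ p : ι × ι, ∑ s : ι × ι, (if p.1 = p.2 then M p * ∫ ω, Y p.1 ω ^ 2 ∂μ else 0)
      * (if s.1 = s.2 then M s * ∫ ω, Y s.1 ω ^ 2 ∂μ else 0)) = m * m := by
    rw [← Finset.sum_mul_sum Finset.univ Finset.univ
      (fun p : ι × ι => if p.1 = p.2 then M p * ∫ ω, Y p.1 ω ^ 2 ∂μ else 0)
      (fun s : ι × ι => if s.1 = s.2 then M s * ∫ ω, Y s.1 ω ^ 2 ∂μ else 0)]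
    have : m = ∑ p : ι × ι, (if p.1 = p.2 then M p * ∫ ω, Y p.1 ω ^ 2 ∂μ else 0) := by
      rw [hEf]
      exact Finset.sum_congr rfl fun p _ => by rw [mul_ite, mul_zero]
    rw [← this]
  -- S2
  have hS2 : (∑ p : ι × ι, ∑ s : ι × ι, (if p.1 = s.1 ∧ p.2 = s.2 then
      M p * M s * ((∫ ω, Y p.1 ω ^ 2 ∂μ) * ∫ ω, Y p.2 ω ^ 2 ∂μ) else 0)) ≤ n := by
    have inner : ∀ p : ι × ι, (∑ s : ι × ι, (if p.1 = s.1 ∧ p.2 = s.2 then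
        M p * M s * ((∫ ω, Y p.1 ω ^ 2 ∂μ) * ∫ ω, Y p.2 ω ^ 2 ∂μ) else 0))
        = M p * M p * ((∫ ω, Y p.1 ω ^ 2 ∂μ) * ∫ ω, Y p.2 ω ^ 2 ∂μ) := by
      intro p
      rw [Finset.sum_eq_single p (fun s _ hsp => if_neg fun h => hsp (Prod.ext h.1.symm h.2.symm))
        (fun h => absurd (Finset.mem_univ p) h)]
      exact if_pos ⟨rfl, rfl⟩
    calc (∑ p : ι × ι, ∑ s : ι × ι, (if p.1 = s.1 ∧ p.2 = s.2 then
        M p * M s * ((∫ ω, Y p.1 ω ^ 2 ∂μ) * ∫ ω, Y p.2 ω ^ 2 ∂μ) else 0))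
        = ∑ p : ι × ι, M p * M p * ((∫ ω, Y p.1 ω ^ 2 ∂μ) * ∫ ω, Y p.2 ω ^ 2 ∂μ) :=
          Finset.sum_congr rfl fun p _ => inner p
      _ ≤ ∑ p : ι × ι, (M p) ^ 2 := by
          refine Finset.sum_le_sum fun p _ => ?_
          have q1 := q_nonneg' μ Y p.1
          have q2 := q_nonneg' μ Y p.2
          have q3 := q_le_one' hmeas hint4 hr p.1
          have q4 := q_le_one' hmeas hint4 hr p.2
          have hqq1 : (∫ ω, Y p.1 ω ^ 2 ∂μ) * ∫ ω, Y p.2 ω ^ 2 ∂μ ≤ 1 := mul_le_one₀ q3 q2 q4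
          have hqq0 : 0 ≤ (∫ ω, Y p.1 ω ^ 2 ∂μ) * ∫ ω, Y p.2 ω ^ 2 ∂μ := mul_nonneg q1 q2
          nlinarith [sq_nonneg (M p)]
      _ = ∑ i, ∑ u, (∑ k : Fin n, c k i * c k u) ^ 2 :=
          Fintype.sum_prod_type (f := fun p : ι × ι => (M p) ^ 2)
      _ ≤ n := frob_le' hc
  -- S3
  have Msymm : ∀ p : ι × ι, M (p.2, p.1) = M p := fun p =>
    Finset.sum_congr rfl fun k _ => mul_comm _ _
  have hS3 : (∑ p : ι × ι, ∑ s : ι × ι, (if p.1 = s.2 ∧ p.2 = s.1 then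
      M p * M s * ((∫ ω, Y p.1 ω ^ 2 ∂μ) * ∫ ω, Y p.2 ω ^ 2 ∂μ) else 0)) ≤ n := by
    have inner : ∀ p : ι × ι, (∑ s : ι × ι, (if p.1 = s.2 ∧ p.2 = s.1 then
        M p * M s * ((∫ ω, Y p.1 ω ^ 2 ∂μ) * ∫ ω, Y p.2 ω ^ 2 ∂μ) else 0))
        = M p * M p * ((∫ ω, Y p.1 ω ^ 2 ∂μ) * ∫ ω, Y p.2 ω ^ 2 ∂μ) := by
      intro p
      rw [Finset.sum_eq_single (p.2, p.1)
        (fun s _ hsp => if_neg fun h => hsp (Prod.ext h.2.symm h.1.symm))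
        (fun h => absurd (Finset.mem_univ _) h)]
      rw [if_pos ⟨rfl, rfl⟩, Msymm p]
    calc (∑ p : ι × ι, ∑ s : ι × ι, (if p.1 = s.2 ∧ p.2 = s.1 then
        M p * M s * ((∫ ω, Y p.1 ω ^ 2 ∂μ) * ∫ ω, Y p.2 ω ^ 2 ∂μ) else 0))
        = ∑ p : ι × ι, M p * M p * ((∫ ω, Y p.1 ω ^ 2 ∂μ) * ∫ ω, Y p.2 ω ^ 2 ∂μ) :=
          Finset.sum_congr rfl fun p _ => inner p
      _ ≤ ∑ p : ι × ι, (M p) ^ 2 := by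
          refine Finset.sum_le_sum fun p _ => ?_
          have q1 := q_nonneg' μ Y p.1
          have q2 := q_nonneg' μ Y p.2
          have q3 := q_le_one' hmeas hint4 hr p.1
          have q4 := q_le_one' hmeas hint4 hr p.2
          have hqq1 : (∫ ω, Y p.1 ω ^ 2 ∂μ) * ∫ ω, Y p.2 ω ^ 2 ∂μ ≤ 1 := mul_le_one₀ q3 q2 q4
          have hqq0 : 0 ≤ (∫ ω, Y p.1 ω ^ 2 ∂μ) * ∫ ω, Y p.2 ω ^ 2 ∂μ := mul_nonneg q1 q2
          nlinarith [sq_nonneg (M p)]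
      _ = ∑ i, ∑ u, (∑ k : Fin n, c k i * c k u) ^ 2 :=
          Fintype.sum_prod_type (f := fun p : ι × ι => (M p) ^ 2)
      _ ≤ n := frob_le' hc
  -- S4
  have hS4 : (∑ p : ι × ι, ∑ s : ι × ι, (if p.1 = p.2 ∧ p.1 = s.1 ∧ p.1 = s.2 then
      M p * M s * ((∫ ω, Y p.1 ω ^ 4 ∂μ) - 3 * (∫ ω, Y p.1 ω ^ 2 ∂μ) ^ 2) else 0)) ≤ (n:ℝ) := by
    have inner : ∀ p : ι × ι, (∑ s : ι × ι, (if p.1 = p.2 ∧ p.1 = s.1 ∧ p.1 = s.2 then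
        M p * M s * ((∫ ω, Y p.1 ω ^ 4 ∂μ) - 3 * (∫ ω, Y p.1 ω ^ 2 ∂μ) ^ 2) else 0))
        = if p.1 = p.2 then
            M p * M (p.1, p.1) * ((∫ ω, Y p.1 ω ^ 4 ∂μ) - 3 * (∫ ω, Y p.1 ω ^ 2 ∂μ) ^ 2)
          else 0 := by
      intro p
      rw [Finset.sum_eq_single (p.1, p.1)
        (fun s _ hsp => if_neg fun h => hsp (Prod.ext h.2.1.symm h.2.2.symm))
        (fun h => absurd (Finset.mem_univ _) h)]
      by_cases h1 : p.1 = p.2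
      · rw [if_pos ⟨h1, rfl, rfl⟩, if_pos h1]
      · rw [if_neg (fun h => h1 h.1), if_neg h1]
    calc (∑ p : ι × ι, ∑ s : ι × ι, (if p.1 = p.2 ∧ p.1 = s.1 ∧ p.1 = s.2 then
        M p * M s * ((∫ ω, Y p.1 ω ^ 4 ∂μ) - 3 * (∫ ω, Y p.1 ω ^ 2 ∂μ) ^ 2) else 0))
        = ∑ p : ι × ι, (if p.1 = p.2 then
            M p * M (p.1, p.1) * ((∫ ω, Y p.1 ω ^ 4 ∂μ) - 3 * (∫ ω, Y p.1 ω ^ 2 ∂μ) ^ 2)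
          else 0) := Finset.sum_congr rfl fun p _ => inner p
      _ = ∑ i, ∑ u, (if i = u then
            M (i, u) * M (i, i) * ((∫ ω, Y i ω ^ 4 ∂μ) - 3 * (∫ ω, Y i ω ^ 2 ∂μ) ^ 2)
          else 0) := Fintype.sum_prod_type _
      _ = ∑ i, M (i, i) * M (i, i) * ((∫ ω, Y i ω ^ 4 ∂μ) - 3 * (∫ ω, Y i ω ^ 2 ∂μ) ^ 2) := by
          refine Finset.sum_congr rfl fun i _ => ?_
          rw [Finset.sum_eq_single i (fun u _ hui => if_neg fun h => hui h.symm)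
            (fun h => absurd (Finset.mem_univ i) h), if_pos rfl]
      _ ≤ ∑ i, M (i, i) := by
          refine Finset.sum_le_sum fun i _ => ?_
          have h0 : (0:ℝ) ≤ M (i, i) := diag_nonneg' i
          have h1 : M (i, i) ≤ 1 := diag_le_one' hc i
          have h2 := hr i
          have h3 : (0:ℝ) ≤ (∫ ω, Y i ω ^ 2 ∂μ) ^ 2 := sq_nonneg _
          nlinarith
      _ = ∑ i, ∑ k : Fin n, c k i * c k i := rfl
      _ ≤ n := trace_le' hc
  -- variance identity
  have key : (∫ ω, ((∑ k : Fin n, (∑ i, c k i * Y i ω) ^ 2) - m) ^ 2 ∂μ)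
      = (∫ ω, (∑ k : Fin n, (∑ i, c k i * Y i ω) ^ 2) ^ 2 ∂μ) - m ^ 2 := by
    rw [show (fun ω => ((∑ k : Fin n, (∑ i, c k i * Y i ω) ^ 2) - m) ^ 2)
      = fun ω => ((∑ k : Fin n, (∑ i, c k i * Y i ω) ^ 2) ^ 2
          - (2 * m) * (∑ k : Fin n, (∑ i, c k i * Y i ω) ^ 2) + m ^ 2) from
      funext fun ω => by ring]
    have hI2 : Integrable (fun ω => (2 * m) * (∑ k : Fin n, (∑ i, c k i * Y i ω) ^ 2)) μ :=
      hfint.const_mul (2 * m)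
    have hI1 : Integrable (fun ω => ((∑ k : Fin n, (∑ i, c k i * Y i ω) ^ 2) ^ 2
        - (2 * m) * (∑ k : Fin n, (∑ i, c k i * Y i ω) ^ 2))) μ := hf2int.sub hI2
    rw [integral_add hI1 (integrable_const (m ^ 2)), integral_sub hf2int hI2,
      integral_const_mul, integral_const]
    simp only [measure_univ, ENNReal.toReal_one, smul_eq_mul, probReal_univ, one_mul]
    rw [← hm]
    ring
  rw [key, hEf2', hS1]
  have h3n : (3 : ℝ) * n = n + n + n := by ring
  rw [h3n]
  have : m * m = m ^ 2 := (sq m).symm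
  linarith [hS2, hS3, hS4]

end Aux

set_option maxHeartbeats 1000000 in
/-- There is an absolute constant `C` such that: if `B` is an `n × N` matrix with `‖B‖ ≤ 1`
and `A` is an `N × n` random matrix with independent mean-zero entries with fourth moments
bounded by `1`, and `X₁,…,X_n` denote the columns of `BA`, then
`E max_j ‖X_j‖₂² ≤ C n`. -/
theorem exp_max_column_norms :
    ∃ C : ℝ, 0 < C ∧
      ∀ (Ω : Type) (_ : MeasureSpace Ω), IsProbabilityMeasure (ℙ : Measure Ω) →
      ∀ (n N : ℕ) (B : Matrix (Fin n) (Fin N) ℝ), opNorm B ≤ 1 →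
      ∀ (a : Fin N → Fin n → Ω → ℝ),
      (∀ i j, Measurable (a i j)) →
      iIndepFun (fun p : Fin N × Fin n => a p.1 p.2) ℙ →
      (∀ i j, ∫ ω, a i j ω = 0) →
      (∀ i j, (∫ ω, (a i j ω) ^ 4) ≤ 1) →
      (∀ i j, Integrable (fun ω => (a i j ω) ^ 4)) →
        (∫ ω, ⨆ j : Fin n, ∑ k : Fin n, (∑ i : Fin N, B k i * a i j ω) ^ 2)
          ≤ C * n := by
  classical
  refine ⟨3, by norm_num, ?_⟩
  intro Ω _ hprob n N B hB a hameas hindep hamean ha4 haint4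
  rcases Nat.eq_zero_or_pos n with hn0 | hn
  · subst hn0
    simp [Real.iSup_of_isEmpty]
  have hnR : (0 : ℝ) < n := by exact_mod_cast hn
  -- per-column data
  have hcol : ∀ j : Fin n,
      Integrable (fun ω => ∑ k : Fin n, (∑ i : Fin N, B k i * a i j ω) ^ 2) ∧
      Integrable (fun ω => (∑ k : Fin n, (∑ i : Fin N, B k i * a i j ω) ^ 2) ^ 2) ∧
      (∫ ω, ∑ k : Fin n, (∑ i : Fin N, B k i * a i j ω) ^ 2) ≤ n ∧
      (∫ ω, ((∑ k : Fin n, (∑ i : Fin N, B k i * a i j ω) ^ 2)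
          - ∫ ω', ∑ k : Fin n, (∑ i : Fin N, B k i * a i j ω') ^ 2) ^ 2) ≤ 3 * n := by
    intro j
    have hinj : Function.Injective (fun i : Fin N => (i, j)) := fun x y hxy => by
      simpa using congrArg Prod.fst hxy
    have hYind : iIndepFun
        (fun i : Fin N => a i j) ℙ := iIndepFun_precomp hindep (fun i => (i, j)) hinj
    exact column_moments hYind (fun i => hameas i j) (fun i => hamean i j)
      (fun i => haint4 i j) (fun i => ha4 i j) (contract B hB)
  set F : Fin n → Ω → ℝ := fun j ω => ∑ k : Fin n, (∑ i : Fin N, B k i * a i j ω) ^ 2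
    with hF
  set m : Fin n → ℝ := fun j => ∫ ω, F j ω with hmdef
  have hFint : ∀ j, Integrable (F j) := fun j => (hcol j).1
  have hF2int : ∀ j, Integrable (fun ω => (F j ω) ^ 2) := fun j => (hcol j).2.1
  have hm_le : ∀ j, m j ≤ n := fun j => (hcol j).2.2.1
  have hvar : ∀ j, (∫ ω, (F j ω - m j) ^ 2) ≤ 3 * n := fun j => (hcol j).2.2.2
  have hFnonneg : ∀ j ω, 0 ≤ F j ω := fun j ω =>
    Finset.sum_nonneg fun k _ => sq_nonneg _
  -- integrability of the dominating function
  have hvint : ∀ j, Integrable (fun ω => (F j ω - m j) ^ 2) := by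
    intro j
    have h1 : (fun ω => (F j ω - m j) ^ 2)
        = fun ω => ((F j ω) ^ 2 - (2 * m j) * F j ω + (m j) ^ 2) :=
      funext fun ω => by ring
    rw [h1]
    exact ((hF2int j).sub ((hFint j).const_mul (2 * m j))).add (integrable_const _)
  have hgint : Integrable
      (fun ω => 2 * (n : ℝ) + (∑ j : Fin n, (F j ω - m j) ^ 2) / (4 * n)) :=
    (integrable_const _).add ((integrable_finset_sum _ fun j _ => hvint j).div_const _)
  -- pointwise bound
  have hptwise : ∀ ω, (⨆ j : Fin n, F j ω)
      ≤ 2 * (n : ℝ) + (∑ j : Fin n, (F j ω - m j) ^ 2) / (4 * n) := by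
    intro ω
    have hne : Nonempty (Fin n) := ⟨⟨0, hn⟩⟩
    refine ciSup_le fun j0 => ?_
    have h4n : (0 : ℝ) < 4 * n := by positivity
    have h1 : (F j0 ω - m j0) - n ≤ (F j0 ω - m j0) ^ 2 / (4 * n) := by
      rw [le_div_iff₀ h4n]
      nlinarith [sq_nonneg (F j0 ω - m j0 - 2 * n)]
    have h2 : (F j0 ω - m j0) ^ 2 / (4 * n) ≤ (∑ j : Fin n, (F j ω - m j) ^ 2) / (4 * n) := by
      gcongr
      exact Finset.single_le_sum (f := fun j => (F j ω - m j) ^ 2)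
        (fun j _ => sq_nonneg _) (Finset.mem_univ j0)
    have h3 : m j0 ≤ n := hm_le j0
    calc F j0 ω = m j0 + ((F j0 ω - m j0) - n) + n := by ring
      _ ≤ n + ((∑ j : Fin n, (F j ω - m j) ^ 2) / (4 * n)) + n := by
          have := le_trans h1 h2
          linarith
      _ = 2 * n + (∑ j : Fin n, (F j ω - m j) ^ 2) / (4 * n) := by ring
  -- conclude
  have hstep : (∫ ω, ⨆ j : Fin n, F j ω)
      ≤ ∫ ω, (2 * (n : ℝ) + (∑ j : Fin n, (F j ω - m j) ^ 2) / (4 * n)) := by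
    refine integral_mono_of_nonneg (ae_of_all _ fun ω => ?_) hgint (ae_of_all _ hptwise)
    have hb : BddAbove (Set.range fun j : Fin n => F j ω) :=
      (Set.finite_range _).bddAbove
    exact le_trans (hFnonneg ⟨0, hn⟩ ω) (le_ciSup hb ⟨0, hn⟩)
  have hrhs : (∫ ω, (2 * (n : ℝ) + (∑ j : Fin n, (F j ω - m j) ^ 2) / (4 * n)))
      = 2 * (n : ℝ) + (∑ j : Fin n, ∫ ω, (F j ω - m j) ^ 2) / (4 * n) := by
    rw [integral_add (integrable_const _)
      ((integrable_finset_sum _ fun j _ => hvint j).div_const _), integral_const]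
    simp only [measure_univ, ENNReal.toReal_one, smul_eq_mul, probReal_univ, one_mul]
    rw [integral_div, integral_finset_sum _ fun j _ => hvint j]
  have hsum : (∑ j : Fin n, ∫ ω, (F j ω - m j) ^ 2) ≤ (n : ℝ) * (3 * n) := by
    calc (∑ j : Fin n, ∫ ω, (F j ω - m j) ^ 2) ≤ ∑ _j : Fin n, 3 * (n : ℝ) :=
          Finset.sum_le_sum fun j _ => hvar j
      _ = (n : ℝ) * (3 * n) := by
          rw [Finset.sum_const, Finset.card_univ, Fintype.card_fin]
          simp [mul_comm]
  have hdiv : (n : ℝ) * (3 * n) / (4 * n) = 3 * n / 4 := by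
    field_simp
  show (∫ ω, ⨆ j : Fin n, F j ω) ≤ 3 * (n : ℝ)
  calc (∫ ω, ⨆ j : Fin n, F j ω)
      ≤ 2 * (n : ℝ) + (∑ j : Fin n, ∫ ω, (F j ω - m j) ^ 2) / (4 * n) := by
        rw [← hrhs]; exact hstep
    _ ≤ 2 * (n : ℝ) + (n : ℝ) * (3 * n) / (4 * n) := by
        have h4n : (0 : ℝ) < 4 * n := by positivity
        gcongr
    _ = 2 * (n : ℝ) + 3 * n / 4 := by rw [hdiv]
    _ ≤ 3 * (n : ℝ) := by linarith
end

section
/- Let a_{ij} (i = 1,…,N; j = 1,…,n) be independent random variables with E[a_{ij}²] ≤ p and |a_{ij}| ≤ 1, where p ∈ (0,1]. Then E max_{1 ≤ i ≤ N} Σ_{j=1}^n a_{ij}² ≤ C(np + log(2N)) for an absolute constant C. -/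
open MeasureTheory ProbabilityTheory

lemma iIndepFun_precomp_of_injective {Ω ι κ : Type*} [MeasurableSpace Ω] {μ : Measure Ω}
    [IsProbabilityMeasure μ] {f : ι → Ω → ℝ} (hf : iIndepFun f μ)
    {u : κ → ι} (hu : Function.Injective u) :
    iIndepFun (fun k => f (u k)) μ := by
  classical
  rw [iIndepFun_iff_measure_inter_preimage_eq_mul]
  intro S sets hsets
  rcases S.eq_empty_or_nonempty with rfl | hS
  · simp
  have : Nonempty κ := ⟨hS.choose⟩
  set sets' : ι → Set ℝ := fun i => sets (Function.invFun u i) with hsets'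
  have hinv : ∀ k, Function.invFun u (u k) = k := fun k => Function.leftInverse_invFun hu k
  have h1 : (⋂ k ∈ S, f (u k) ⁻¹' sets k) = ⋂ i ∈ S.image u, f i ⁻¹' sets' i := by
    rw [Finset.set_biInter_finset_image]
    exact Set.iInter₂_congr fun k _ => by rw [hsets']; simp [hinv]
  rw [h1, hf.measure_inter_preimage_eq_mul (S.image u)
      (fun i hi => by
        obtain ⟨k, hk, rfl⟩ := Finset.mem_image.1 hi
        simpa [hsets', hinv] using hsets k hk),
    Finset.prod_image (fun x _ y _ h => hu h)]
  exact Finset.prod_congr rfl fun k hk => by simp [hsets', hinv]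

lemma exp_le_one_add_of_mem {x : ℝ} (h0 : 0 ≤ x) (h1 : x ≤ 1) :
    Real.exp x ≤ 1 + (Real.exp 1 - 1) * x := by
  have := convexOn_exp.2 (Set.mem_univ (0:ℝ)) (Set.mem_univ (1:ℝ))
    (by linarith : (0:ℝ) ≤ 1 - x) h0 (by ring)
  simp only [smul_eq_mul, mul_zero, mul_one, zero_add, Real.exp_zero] at this
  nlinarith [this]

/-- There is an absolute constant `C` such that: for independent random variables `a_{ij}`
with `E a_{ij}² ≤ p` and `|a_{ij}| ≤ 1` (where `p ∈ (0,1]`),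
`E max_i Σ_j a_{ij}² ≤ C (np + log(2N))`. -/
theorem exp_max_row_sums :
    ∃ C : ℝ, 0 < C ∧
      ∀ (Ω : Type) (_ : MeasureSpace Ω), IsProbabilityMeasure (ℙ : Measure Ω) →
      ∀ (N n : ℕ) (p : ℝ), 0 < p → p ≤ 1 →
      ∀ (a : Fin N → Fin n → Ω → ℝ),
      (∀ i j, Measurable (a i j)) →
      iIndepFun (fun q : Fin N × Fin n => a q.1 q.2) ℙ →
      (∀ i j, (∫ ω, (a i j ω) ^ 2) ≤ p) →
      (∀ i j ω, |a i j ω| ≤ 1) →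
        (∫ ω, ⨆ i : Fin N, ∑ j : Fin n, (a i j ω) ^ 2)
          ≤ C * (n * p + Real.log (2 * N)) := by
  refine ⟨2, by norm_num, ?_⟩
  intro Ω _ hprob N n p hp hp1 a hmeas hindep hE habs
  have he1 : (1:ℝ) ≤ Real.exp 1 - 1 := by
    have := Real.add_one_le_exp (1:ℝ); linarith
  have he2 : Real.exp 1 - 1 ≤ 2 := by
    have := Real.exp_one_lt_d9; linarith
  -- squares are in [0,1]
  have hsq0 : ∀ i j (ω : Ω), (0:ℝ) ≤ (a i j ω) ^ 2 := fun i j ω => sq_nonneg _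
  have hsq1 : ∀ i j (ω : Ω), (a i j ω) ^ 2 ≤ 1 := by
    intro i j ω
    calc (a i j ω)^2 = |a i j ω|^2 := (sq_abs _).symm
      _ ≤ 1 := pow_le_one₀ (abs_nonneg _) (habs i j ω)
  rcases Nat.eq_zero_or_pos N with rfl | hN
  · have : (∫ ω, ⨆ i : Fin 0, ∑ j : Fin n, (a i j ω) ^ 2) = 0 := by
      simp [Real.iSup_of_isEmpty]
    rw [this]
    have : Real.log (2 * (0:ℕ)) = 0 := by norm_num
    rw [this]
    positivity
  haveI : Nonempty (Fin N) := Fin.pos_iff_nonempty.mp hN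
  set S : Fin N → Ω → ℝ := fun i ω => ∑ j, (a i j ω) ^ 2 with hSdef
  have hSmeas : ∀ i, Measurable (S i) :=
    fun i => Finset.measurable_sum _ fun j _ => (hmeas i j).pow_const 2
  have hS0 : ∀ i ω, 0 ≤ S i ω := fun i ω => Finset.sum_nonneg fun j _ => hsq0 i j ω
  have hSn : ∀ i ω, S i ω ≤ (n:ℝ) := by
    intro i ω
    calc S i ω ≤ ∑ _j : Fin n, (1:ℝ) := Finset.sum_le_sum fun j _ => hsq1 i j ω
      _ = n := by simp
  -- integrability of exp (S i)
  have hExpMeas : ∀ i, Measurable fun ω => Real.exp (S i ω) := fun i => (hSmeas i).exp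
  have hExpInt : ∀ i, Integrable (fun ω => Real.exp (S i ω)) := by
    intro i
    refine Integrable.mono' (integrable_const (Real.exp n)) (hExpMeas i).aestronglyMeasurable
      (Filter.Eventually.of_forall fun ω => ?_)
    rw [Real.norm_eq_abs, abs_of_pos (Real.exp_pos _)]
    exact Real.exp_le_exp.2 (hSn i ω)
  -- the MGF bound: ∫ exp (S i) ≤ exp ((e-1) * (n*p))
  have hExpBound : ∀ i, (∫ ω, Real.exp (S i ω)) ≤ Real.exp ((Real.exp 1 - 1) * (n * p)) := by
    intro i
    set X : Fin n → Ω → ℝ := fun j ω => (a i j ω) ^ 2 with hXdef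
    have hXmeas : ∀ j, Measurable (X j) := fun j => (hmeas i j).pow_const 2
    have hXindep : iIndepFun X ℙ := by
      have h1 := iIndepFun_precomp_of_injective hindep
        (u := fun j : Fin n => ((i, j) : Fin N × Fin n))
        (fun x y h => by simpa using congrArg Prod.snd h)
      exact h1.comp (fun _ => fun x : ℝ => x ^ 2) fun _ => measurable_id.pow_const 2
    have hmgf := hXindep.mgf_sum hXmeas Finset.univ (t := 1)
    have hterm : ∀ j, mgf (X j) ℙ 1 ≤ Real.exp ((Real.exp 1 - 1) * p) := by
      intro j
      have hXint : Integrable (X j) := by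
        refine Integrable.mono' (integrable_const 1) (hXmeas j).aestronglyMeasurable
          (Filter.Eventually.of_forall fun ω => ?_)
        rw [Real.norm_eq_abs, abs_of_nonneg (hsq0 i j ω)]
        exact hsq1 i j ω
      have h2 : (∫ ω, Real.exp (X j ω)) ≤ ∫ ω, (1 + (Real.exp 1 - 1) * X j ω) := by
        refine integral_mono ?_ ?_ ?_
        · refine Integrable.mono' (integrable_const (Real.exp 1))
            (hXmeas j).exp.aestronglyMeasurable (Filter.Eventually.of_forall fun ω => ?_)
          rw [Real.norm_eq_abs, abs_of_pos (Real.exp_pos _)]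
          exact Real.exp_le_exp.2 (hsq1 i j ω)
        · exact (integrable_const 1).add (hXint.const_mul _)
        · exact fun ω => exp_le_one_add_of_mem (hsq0 i j ω) (hsq1 i j ω)
      have h3 : (∫ ω, (1 + (Real.exp 1 - 1) * X j ω)) = 1 + (Real.exp 1 - 1) * ∫ ω, X j ω := by
        rw [integral_add (integrable_const 1) (hXint.const_mul _), integral_const,
          integral_const_mul]
        simp
      have h4 : (∫ ω, X j ω) ≤ p := hE i j
      calc mgf (X j) ℙ 1 = ∫ ω, Real.exp (X j ω) := by simp [mgf]
        _ ≤ 1 + (Real.exp 1 - 1) * ∫ ω, X j ω := h2.trans_eq h3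
        _ ≤ 1 + (Real.exp 1 - 1) * p := by nlinarith
        _ ≤ Real.exp ((Real.exp 1 - 1) * p) := by
            have := Real.add_one_le_exp ((Real.exp 1 - 1) * p); linarith
    have hsum : (∫ ω, Real.exp (S i ω)) = mgf (∑ j, X j) ℙ 1 := by
      simp only [mgf, one_mul]
      congr 1
      funext ω
      simp [hSdef, hXdef, Finset.sum_apply]
    calc (∫ ω, Real.exp (S i ω)) = ∏ j, mgf (X j) ℙ 1 := by rw [hsum, hmgf]
      _ ≤ ∏ _j : Fin n, Real.exp ((Real.exp 1 - 1) * p) :=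
          Finset.prod_le_prod (fun j _ => mgf_nonneg) (fun j _ => hterm j)
      _ = Real.exp ((Real.exp 1 - 1) * p) ^ n := by simp
      _ = Real.exp ((Real.exp 1 - 1) * (n * p)) := by
          rw [← Real.exp_nat_mul]; ring_nf
  -- the log-sum-exp comparison
  set c : ℝ := N * Real.exp ((Real.exp 1 - 1) * (n * p)) with hcdef
  have hc : 0 < c := by positivity
  set G : Ω → ℝ := fun ω => Real.log (∑ i, Real.exp (S i ω)) with hGdef
  have hsum_pos : ∀ ω, 0 < ∑ i, Real.exp (S i ω) :=
    fun ω => Finset.sum_pos (fun i _ => Real.exp_pos _) Finset.univ_nonempty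
  have hsum_ge : ∀ ω, (N:ℝ) ≤ ∑ i, Real.exp (S i ω) := by
    intro ω
    calc (N:ℝ) = ∑ _i : Fin N, (1:ℝ) := by simp
      _ ≤ ∑ i, Real.exp (S i ω) := Finset.sum_le_sum fun i _ => by
          rw [← Real.exp_zero]; exact Real.exp_le_exp.2 (hS0 i ω)
  have hsum_le : ∀ ω, (∑ i, Real.exp (S i ω)) ≤ N * Real.exp n := by
    intro ω
    calc (∑ i, Real.exp (S i ω)) ≤ ∑ _i : Fin N, Real.exp n :=
        Finset.sum_le_sum fun i _ => Real.exp_le_exp.2 (hSn i ω)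
      _ = N * Real.exp n := by simp [mul_comm]
  have hG0 : ∀ ω, 0 ≤ G ω := by
    intro ω
    rw [hGdef]
    refine Real.log_nonneg ?_
    have : (1:ℝ) ≤ (N:ℝ) := by exact_mod_cast hN
    linarith [hsum_ge ω]
  have hGint : Integrable G := by
    refine Integrable.mono' (integrable_const (Real.log ((N:ℝ) * Real.exp n)))
      ((Finset.measurable_sum _ fun i _ => hExpMeas i).log).aestronglyMeasurable
      (Filter.Eventually.of_forall fun ω => ?_)
    rw [Real.norm_eq_abs, abs_of_nonneg (hG0 ω)]
    exact Real.log_le_log (hsum_pos ω) (hsum_le ω)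
  -- sup ≤ G pointwise
  have hsupG : ∀ ω, (⨆ i : Fin N, ∑ j : Fin n, (a i j ω) ^ 2) ≤ G ω := by
    intro ω
    refine ciSup_le fun i => ?_
    have : S i ω = Real.log (Real.exp (S i ω)) := (Real.log_exp _).symm
    rw [show (∑ j : Fin n, (a i j ω) ^ 2) = S i ω from rfl, this]
    exact Real.log_le_log (Real.exp_pos _)
      (Finset.single_le_sum (fun i _ => (Real.exp_pos (S i ω)).le) (Finset.mem_univ i))
  have hsup0 : ∀ ω, 0 ≤ ⨆ i : Fin N, ∑ j : Fin n, (a i j ω) ^ 2 := by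
    intro ω
    exact Real.iSup_nonneg fun i => hS0 i ω
  have step1 : (∫ ω, ⨆ i : Fin N, ∑ j : Fin n, (a i j ω) ^ 2) ≤ ∫ ω, G ω :=
    integral_mono_of_nonneg (Filter.Eventually.of_forall hsup0) hGint
      (Filter.Eventually.of_forall hsupG)
  -- ∫ G ≤ log c
  have hGle : ∀ ω, G ω ≤ Real.log c + (∑ i, Real.exp (S i ω)) / c - 1 := by
    intro ω
    have h := Real.log_le_sub_one_of_pos (div_pos (hsum_pos ω) hc)
    rw [Real.log_div (hsum_pos ω).ne' hc.ne'] at h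
    rw [hGdef]
    linarith
  have hsumint : Integrable (fun ω => ∑ i, Real.exp (S i ω)) :=
    integrable_finset_sum _ fun i _ => hExpInt i
  have step2 : (∫ ω, G ω) ≤ Real.log c := by
    have h1 : (∫ ω, G ω) ≤ ∫ ω, (Real.log c + (∑ i, Real.exp (S i ω)) / c - 1) := by
      refine integral_mono hGint ?_ hGle
      exact ((integrable_const _).add (hsumint.div_const c)).sub (integrable_const 1)
    have h2 : (∫ ω, (Real.log c + (∑ i, Real.exp (S i ω)) / c - 1))
        = Real.log c + (∫ ω, ∑ i, Real.exp (S i ω)) / c - 1 := by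
      have heq : (fun ω => Real.log c + (∑ i, Real.exp (S i ω)) / c - 1)
          = fun ω => (Real.log c - 1) + (∑ i, Real.exp (S i ω)) / c := by
        funext ω; ring
      rw [heq, integral_add (integrable_const _) (hsumint.div_const c), integral_div,
        integral_const]
      simp only [measure_univ, ENNReal.toReal_one, smul_eq_mul, one_smul, probReal_univ]
      ring
    have h3 : (∫ ω, ∑ i, Real.exp (S i ω)) ≤ c := by
      rw [integral_finset_sum _ fun i _ => hExpInt i]
      calc (∑ i, ∫ ω, Real.exp (S i ω))
          ≤ ∑ _i : Fin N, Real.exp ((Real.exp 1 - 1) * (n * p)) :=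
            Finset.sum_le_sum fun i _ => hExpBound i
        _ = c := by simp [hcdef, mul_comm]
    have h4 : (∫ ω, ∑ i, Real.exp (S i ω)) / c ≤ 1 := by
      rw [div_le_one hc]; exact h3
    linarith
  -- conclude
  have hlogc : Real.log c = Real.log N + (Real.exp 1 - 1) * (n * p) := by
    rw [hcdef, Real.log_mul (by exact_mod_cast hN.ne' : (N:ℝ) ≠ 0) (Real.exp_ne_zero _),
      Real.log_exp]
  have hlogN : Real.log N ≤ Real.log (2 * N) := by
    refine Real.log_le_log (by exact_mod_cast hN) ?_
    have : (1:ℝ) ≤ (N:ℝ) := by exact_mod_cast hN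
    linarith
  have hlog2N : 0 ≤ Real.log (2 * N) := by
    refine Real.log_nonneg ?_
    have : (1:ℝ) ≤ (N:ℝ) := by exact_mod_cast hN
    linarith
  have hnp : 0 ≤ (n:ℝ) * p := by positivity
  calc (∫ ω, ⨆ i : Fin N, ∑ j : Fin n, (a i j ω) ^ 2)
      ≤ Real.log c := step1.trans step2
    _ = Real.log N + (Real.exp 1 - 1) * (n * p) := hlogc
    _ ≤ Real.log (2 * N) + 2 * (n * p) := by nlinarith
    _ ≤ 2 * (n * p + Real.log (2 * N)) := by linarith
end

section
/- Let a_{ij} be independent random variables with E[a_{ij}²] ≤ p ∈ (0,1] and |a_{ij}| ≤ 1, and let B be an n × N matrix with ‖B‖ ≤ 1 and columns B₁,…,B_N. Then E max_{1 ≤ j ≤ n} Σ_{i=1}^N a_{ij}² ‖Bᵢ‖₂² ≤ C(np + log(2n)) for an absolute constant C. -/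
open MeasureTheory ProbabilityTheory


lemma chord_exp {x c : ℝ} (hx0 : 0 ≤ x) (hx1 : x ≤ 1) : Real.exp (x * c) ≤ 1 + x * (Real.exp c - 1) := by
  have h := convexOn_exp.2 (Set.mem_univ c) (Set.mem_univ (0:ℝ))
    hx0 (sub_nonneg.mpr hx1 : (0:ℝ) ≤ 1 - x) (by ring)
  simp only [smul_eq_mul, mul_zero, add_zero, Real.exp_zero, mul_one] at h
  nlinarith [h]

lemma integrable_of_bdd {Ω : Type} [MeasureSpace Ω] [IsProbabilityMeasure (ℙ : Measure Ω)]
    {f : Ω → ℝ} (hm : Measurable f) {c : ℝ} (h : ∀ ω, |f ω| ≤ c) : Integrable f ℙ :=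
  ⟨hm.aestronglyMeasurable, HasFiniteIntegral.of_bounded (C := c) (ae_of_all _ fun ω => by
    simpa using h ω)⟩

lemma indep_col {Ω : Type} [MeasureSpace Ω] {N n : ℕ} (a : Fin N → Fin n → Ω → ℝ)
    (h : iIndepFun (fun q : Fin N × Fin n => a q.1 q.2) ℙ) (j : Fin n) :
    iIndepFun (fun i : Fin N => a i j) ℙ := by
  rw [iIndepFun_iff_measure_inter_preimage_eq_mul] at h ⊢
  intro S sets hsets
  classical
  set e : Fin N ↪ Fin N × Fin n := ⟨fun i => (i, j), fun i i' hii => by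
    simpa using congrArg Prod.fst hii⟩ with he
  have key := h (S.map e) (sets := fun q => sets q.1) (fun q hq => by
    obtain ⟨i, hi, rfl⟩ := Finset.mem_map.mp hq
    exact hsets i hi)
  have h1 : (⋂ q ∈ S.map e, a q.1 q.2 ⁻¹' sets q.1) =
      ⋂ i ∈ S, (a i j) ⁻¹' sets i := by
    ext ω; simp [he, Finset.mem_map]; exact Iff.rfl
  have h2 : (∏ q ∈ S.map e, (ℙ : Measure Ω) (a q.1 q.2 ⁻¹' sets q.1)) =
      ∏ i ∈ S, (ℙ : Measure Ω) ((a i j) ⁻¹' sets i) := by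
    rw [Finset.prod_map]
    rfl
  rw [h1, h2] at key
  exact key

lemma integral_prod_of_indep {Ω : Type} [MeasureSpace Ω] [IsProbabilityMeasure (ℙ : Measure Ω)]
    {N : ℕ} (f : Fin N → Ω → ℝ) (hm : ∀ i, Measurable (f i))
    (h : iIndepFun f ℙ) (s : Finset (Fin N)) :
    ∫ ω, ∏ i ∈ s, f i ω = ∏ i ∈ s, ∫ ω, f i ω := by
  classical
  induction s using Finset.induction with
  | empty => simp
  | @insert i s hi ih =>
    have hindep : IndepFun (∏ k ∈ s, f k) (f i) ℙ :=
      h.indepFun_finsetProd_of_notMem hm hi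
    have hprodm : Measurable (∏ k ∈ s, f k) := by
      simpa [Finset.prod_fn] using Finset.measurable_prod s (fun k _ => hm k)
    calc ∫ ω, ∏ k ∈ insert i s, f k ω
        = ∫ ω, ((∏ k ∈ s, f k) * f i) ω := by
          congr 1; ext ω
          simp [Finset.prod_insert hi, Finset.prod_apply, mul_comm]
      _ = (∫ ω, (∏ k ∈ s, f k) ω) * ∫ ω, f i ω :=
          hindep.integral_mul_eq_mul_integral hprodm.aestronglyMeasurable (hm i).aestronglyMeasurable
      _ = ∏ k ∈ insert i s, ∫ ω, f k ω := by
          rw [Finset.prod_insert hi]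
          simp only [Finset.prod_apply] at ih ⊢
          rw [ih, mul_comm]

lemma mulVec_bound {n N : ℕ} (B : Matrix (Fin n) (Fin N) ℝ) (hB : opNorm B ≤ 1)
    (v : Fin N → ℝ) :
    Real.sqrt (∑ k, (B.mulVec v k)^2) ≤ Real.sqrt (∑ i, (v i)^2) := by
  set L := LinearMap.toContinuousLinearMap (Matrix.toEuclideanLin B)
  set x : EuclideanSpace ℝ (Fin N) := (WithLp.equiv 2 _).symm v
  have h1 : ‖L x‖ ≤ ‖x‖ := by
    calc ‖L x‖ ≤ ‖L‖ * ‖x‖ := L.le_opNorm x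
      _ ≤ 1 * ‖x‖ := by
          apply mul_le_mul_of_nonneg_right hB (norm_nonneg x)
      _ = ‖x‖ := one_mul _
  have hLx : L x = (WithLp.equiv 2 _).symm (B.mulVec v) := by
    simp [L, x, Matrix.toEuclideanLin_apply_piLp_toLp]
  have hnx : ‖x‖ = Real.sqrt (∑ i, (v i)^2) := by
    rw [EuclideanSpace.norm_eq]
    congr 1
    refine Finset.sum_congr rfl fun i _ => ?_
    simp [x, sq_abs]
  have hnLx : ‖L x‖ = Real.sqrt (∑ k, (B.mulVec v k)^2) := by
    rw [hLx, EuclideanSpace.norm_eq]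
    congr 1
    refine Finset.sum_congr rfl fun k _ => ?_
    simp [sq_abs]
  rw [hnLx, hnx] at h1
  exact h1

lemma col_bound {n N : ℕ} (B : Matrix (Fin n) (Fin N) ℝ) (hB : opNorm B ≤ 1)
    (i : Fin N) : ∑ k, (B k i)^2 ≤ 1 := by
  classical
  have h := mulVec_bound B hB (Pi.single i 1)
  have h2 : ∑ k, (B.mulVec (Pi.single i 1) k)^2 = ∑ k, (B k i)^2 := by
    refine Finset.sum_congr rfl fun k _ => ?_
    rw [Matrix.mulVec_single]
    simp
  have h3 : ∑ i', ((Pi.single i 1 : Fin N → ℝ) i')^2 = 1 := by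
    rw [Finset.sum_eq_single i] <;> simp +contextual [Pi.single_apply]
  rw [h2, h3, Real.sqrt_one] at h
  have hnn : (0:ℝ) ≤ ∑ k, (B k i)^2 := Finset.sum_nonneg fun k _ => sq_nonneg _
  nlinarith [Real.sq_sqrt hnn, Real.sqrt_nonneg (∑ k, (B k i)^2)]

lemma row_bound {n N : ℕ} (B : Matrix (Fin n) (Fin N) ℝ) (hB : opNorm B ≤ 1)
    (k : Fin n) : ∑ i, (B k i)^2 ≤ 1 := by
  classical
  set S := ∑ i, (B k i)^2 with hS
  have hSnn : 0 ≤ S := Finset.sum_nonneg fun i _ => sq_nonneg _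
  set v : Fin N → ℝ := fun i => B k i with hv
  have h1 := mulVec_bound B hB v
  have h2 : B.mulVec v k = S := by
    simp [Matrix.mulVec, dotProduct, v, S, sq]
  have h3 : S^2 ≤ ∑ k', (B.mulVec v k')^2 := by
    have := Finset.single_le_sum (f := fun k' => (B.mulVec v k')^2)
      (fun k' _ => sq_nonneg _) (Finset.mem_univ k)
    rw [h2] at this
    simpa using this
  have h4 : S ≤ Real.sqrt (∑ k', (B.mulVec v k')^2) := Real.le_sqrt_of_sq_le h3
  have h5 : Real.sqrt (∑ i, (v i)^2) = Real.sqrt S := by rw [hS]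
  rw [h5] at h1
  have h6 : S ≤ Real.sqrt S := le_trans h4 h1
  nlinarith [Real.sq_sqrt hSnn, Real.sqrt_nonneg S]


section Main

set_option maxHeartbeats 2000000 in
/-- There is an absolute constant `C` such that: for independent random variables `a_{ij}`
with `E a_{ij}² ≤ p ∈ (0,1]` and `|a_{ij}| ≤ 1`, and any `n × N` matrix `B` with `‖B‖ ≤ 1`
and columns `Bᵢ`, one has `E max_j Σ_i a_{ij}² ‖Bᵢ‖₂² ≤ C (np + log(2n))`. -/
theorem exp_max_weighted_column_sums :
    ∃ C : ℝ, 0 < C ∧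
      ∀ (Ω : Type) (_ : MeasureSpace Ω), IsProbabilityMeasure (ℙ : Measure Ω) →
      ∀ (N n : ℕ) (p : ℝ), 0 < p → p ≤ 1 →
      ∀ (B : Matrix (Fin n) (Fin N) ℝ), opNorm B ≤ 1 →
      ∀ (a : Fin N → Fin n → Ω → ℝ),
      (∀ i j, Measurable (a i j)) →
      iIndepFun (fun q : Fin N × Fin n => a q.1 q.2) ℙ →
      (∀ i j, (∫ ω, (a i j ω) ^ 2) ≤ p) →
      (∀ i j ω, |a i j ω| ≤ 1) →
        (∫ ω, ⨆ j : Fin n, ∑ i : Fin N, (a i j ω) ^ 2 * ∑ k : Fin n, (B k i) ^ 2)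
          ≤ C * (n * p + Real.log (2 * n)) := by
  classical
  refine ⟨3, by norm_num, ?_⟩
  intro Ω _ hprob N n p hp hp1 B hB a hmeas hindep hmom habs
  haveI := hprob
  rcases Nat.eq_zero_or_pos n with hn | hn
  · subst hn
    simp [Real.iSup_of_isEmpty]
  have hn0 : (0:ℝ) < n := by exact_mod_cast hn
  -- weights
  set w : Fin N → ℝ := fun i => ∑ k : Fin n, (B k i)^2 with hw
  have hw0 : ∀ i, 0 ≤ w i := fun i => Finset.sum_nonneg fun k _ => sq_nonneg _
  have hw1 : ∀ i, w i ≤ 1 := fun i => col_bound B hB i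
  have hwsum : ∑ i, w i ≤ (n:ℝ) := by
    calc ∑ i, w i = ∑ k : Fin n, ∑ i : Fin N, (B k i)^2 := Finset.sum_comm
      _ ≤ ∑ _k : Fin n, (1:ℝ) := Finset.sum_le_sum fun k _ => row_bound B hB k
      _ = n := by simp
  set X : Fin n → Ω → ℝ := fun j ω => ∑ i : Fin N, (a i j ω)^2 * w i with hX
  have ha2 : ∀ i j ω, (a i j ω)^2 ≤ 1 := fun i j ω => by
    have := habs i j ω
    nlinarith [abs_nonneg (a i j ω), sq_abs (a i j ω)]
  have ha20 : ∀ i j ω, 0 ≤ (a i j ω)^2 := fun i j ω => sq_nonneg _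
  have hX0 : ∀ j ω, 0 ≤ X j ω := fun j ω =>
    Finset.sum_nonneg fun i _ => mul_nonneg (sq_nonneg _) (hw0 i)
  have hXle : ∀ j ω, X j ω ≤ N := fun j ω => by
    calc X j ω ≤ ∑ _i : Fin N, (1:ℝ) :=
          Finset.sum_le_sum fun i _ =>
            mul_le_one₀ (ha2 i j ω) (hw0 i) (hw1 i)
      _ = N := by simp
  have hXmeas : ∀ j, Measurable (X j) := fun j =>
    Finset.measurable_sum _ fun i _ => ((hmeas i j).pow_const 2).mul_const (w i)
  set t : ℝ := 2 * (n * p) + Real.log n with ht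
  have hlogn : 0 ≤ Real.log n := Real.log_nonneg (by exact_mod_cast hn)
  have ht0 : 0 ≤ t := by positivity
  -- per-factor bound
  have hfac : ∀ i j, ∫ ω, Real.exp ((a i j ω)^2 * w i) ≤ Real.exp (2 * p * w i) := by
    intro i j
    have hfm : Measurable fun ω => Real.exp ((a i j ω)^2 * w i) :=
      (((hmeas i j).pow_const 2).mul_const (w i)).exp
    have hgm : Measurable fun ω => 1 + (a i j ω)^2 * (Real.exp (w i) - 1) :=
      measurable_const.add (((hmeas i j).pow_const 2).mul_const _)
    have hint1 : Integrable (fun ω => Real.exp ((a i j ω)^2 * w i)) ℙ := by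
      refine integrable_of_bdd hfm (c := Real.exp 1) fun ω => ?_
      rw [abs_of_nonneg (Real.exp_pos _).le]
      exact Real.exp_le_exp.mpr (mul_le_one₀ (ha2 i j ω) (hw0 i) (hw1 i))
    have hint2 : Integrable (fun ω => 1 + (a i j ω)^2 * (Real.exp (w i) - 1)) ℙ := by
      refine integrable_of_bdd hgm (c := 1 + Real.exp (w i)) fun ω => ?_
      have h1 : 0 ≤ Real.exp (w i) - 1 := by
        have := Real.one_le_exp (hw0 i); linarith
      have h2 : (a i j ω)^2 * (Real.exp (w i) - 1) ≤ Real.exp (w i) - 1 :=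
        mul_le_of_le_one_left h1 (ha2 i j ω)
      have h3 : 0 ≤ (a i j ω)^2 * (Real.exp (w i) - 1) := mul_nonneg (sq_nonneg _) h1
      rw [abs_of_nonneg (by linarith)]
      linarith
    have hchord : ∀ ω, Real.exp ((a i j ω)^2 * w i)
        ≤ 1 + (a i j ω)^2 * (Real.exp (w i) - 1) := fun ω =>
      chord_exp (sq_nonneg _) (ha2 i j ω)
    have hma : Integrable (fun ω => (a i j ω)^2) ℙ :=
      integrable_of_bdd ((hmeas i j).pow_const 2) (c := 1)
        (fun ω => by rw [abs_of_nonneg (sq_nonneg _)]; exact ha2 i j ω)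
    have step1 : ∫ ω, Real.exp ((a i j ω)^2 * w i)
        ≤ ∫ ω, (1 + (a i j ω)^2 * (Real.exp (w i) - 1)) :=
      integral_mono hint1 hint2 hchord
    have step2 : ∫ ω, (1 + (a i j ω)^2 * (Real.exp (w i) - 1))
        = 1 + (∫ ω, (a i j ω)^2) * (Real.exp (w i) - 1) := by
      rw [integral_add (integrable_const 1) (hma.mul_const _), integral_const,
        integral_mul_const]
      simp
    have hew : 0 ≤ Real.exp (w i) - 1 := by
      have := Real.one_le_exp (hw0 i); linarith
    have step3 : (∫ ω, (a i j ω)^2) * (Real.exp (w i) - 1) ≤ p * (Real.exp (w i) - 1) :=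
      mul_le_mul_of_nonneg_right (hmom i j) hew
    have hexp1 : Real.exp 1 < 2.7182818286 := Real.exp_one_lt_d9
    have step4 : Real.exp (w i) - 1 ≤ 2 * w i := by
      have := chord_exp (hw0 i) (hw1 i) (c := 1)
      rw [mul_one] at this
      nlinarith [hw0 i]
    have step5 : p * (Real.exp (w i) - 1) ≤ 2 * p * w i := by nlinarith [hp.le]
    have step6 : 1 + 2 * p * w i ≤ Real.exp (2 * p * w i) := by
      have := Real.add_one_le_exp (2 * p * w i); linarith
    linarith
  -- key per-column bound
  have key : ∀ j, ∫ ω, Real.exp (X j ω - t) ≤ (n:ℝ)⁻¹ := by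
    intro j
    set F : Fin N → Ω → ℝ := fun i ω => Real.exp ((a i j ω)^2 * w i) with hF
    have hFm : ∀ i, Measurable (F i) := fun i =>
      (((hmeas i j).pow_const 2).mul_const (w i)).exp
    have hFindep : iIndepFun F ℙ := by
      have := (indep_col a hindep j).comp
        (g := fun i (x : ℝ) => Real.exp (x^2 * w i))
        (fun i => ((measurable_id.pow_const 2).mul_const (w i)).exp)
      exact this
    have hprod : ∫ ω, Real.exp (X j ω) = ∏ i, ∫ ω, F i ω := by
      rw [show (fun ω => Real.exp (X j ω)) = fun ω => ∏ i, F i ω from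
        funext fun ω => Real.exp_sum _ _]
      exact integral_prod_of_indep F hFm hFindep Finset.univ
    have hF0 : ∀ i, 0 ≤ ∫ ω, F i ω := fun i =>
      integral_nonneg fun ω => (Real.exp_pos _).le
    have hprodle : ∏ i, ∫ ω, F i ω ≤ Real.exp (2 * p * (n:ℝ)) := by
      calc ∏ i, ∫ ω, F i ω ≤ ∏ i, Real.exp (2 * p * w i) :=
            Finset.prod_le_prod (fun i _ => hF0 i) (fun i _ => hfac i j)
        _ = Real.exp (∑ i, 2 * p * w i) := (Real.exp_sum _ _).symm
        _ ≤ Real.exp (2 * p * (n:ℝ)) := by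
            apply Real.exp_le_exp.mpr
            rw [← Finset.mul_sum]
            have h2p : 0 ≤ 2 * p := by linarith
            nlinarith [hwsum]
    have hsub : ∫ ω, Real.exp (X j ω - t) = (∫ ω, Real.exp (X j ω)) / Real.exp t := by
      simp_rw [Real.exp_sub]
      exact integral_div _ _
    rw [hsub, hprod]
    have hdiv : (∏ i, ∫ ω, F i ω) / Real.exp t ≤ Real.exp (2 * p * (n:ℝ)) / Real.exp t := by
      gcongr
    refine hdiv.trans ?_
    rw [← Real.exp_sub]
    have : 2 * p * (n:ℝ) - t = -Real.log n := by rw [ht]; ring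
    rw [this, Real.exp_neg, Real.exp_log hn0]
  -- integrability of the dominating function
  have hgint : Integrable (fun ω => t + ∑ j, Real.exp (X j ω - t)) ℙ := by
    refine (integrable_const t).add (integrable_finset_sum _ fun j _ => ?_)
    refine integrable_of_bdd ((hXmeas j).sub_const t).exp (c := Real.exp N) fun ω => ?_
    rw [abs_of_nonneg (Real.exp_pos _).le]
    exact Real.exp_le_exp.mpr (by have := hXle j ω; linarith)
  -- pointwise dominate
  haveI : Nonempty (Fin n) := ⟨⟨0, hn⟩⟩
  have hdom : ∀ ω, (⨆ j : Fin n, X j ω) ≤ t + ∑ j, Real.exp (X j ω - t) := by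
    intro ω
    refine ciSup_le fun j => ?_
    have h1 : X j ω ≤ t + Real.exp (X j ω - t) := by
      have := Real.add_one_le_exp (X j ω - t); linarith
    have h2 : Real.exp (X j ω - t) ≤ ∑ j', Real.exp (X j' ω - t) :=
      Finset.single_le_sum (f := fun j' => Real.exp (X j' ω - t))
        (fun j' _ => (Real.exp_pos _).le) (Finset.mem_univ j)
    linarith
  have hnonneg : ∀ ω, 0 ≤ ⨆ j : Fin n, X j ω := by
    intro ω
    have hbdd : BddAbove (Set.range fun j => X j ω) := (Set.finite_range _).bddAbove
    exact le_trans (hX0 ⟨0, hn⟩ ω) (le_ciSup hbdd ⟨0, hn⟩)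
  have hmain : (∫ ω, ⨆ j : Fin n, X j ω) ≤ t + 1 := by
    calc (∫ ω, ⨆ j : Fin n, X j ω) ≤ ∫ ω, (t + ∑ j, Real.exp (X j ω - t)) :=
          integral_mono_of_nonneg (ae_of_all _ hnonneg) hgint (ae_of_all _ hdom)
      _ = t + ∑ j, ∫ ω, Real.exp (X j ω - t) := by
          rw [integral_add (integrable_const t) (integrable_finset_sum _ fun j _ =>
            integrable_of_bdd ((hXmeas j).sub_const t).exp (c := Real.exp N) fun ω => by
              rw [abs_of_nonneg (Real.exp_pos _).le]
              exact Real.exp_le_exp.mpr (by have := hXle j ω; linarith)),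
            integral_const, integral_finset_sum _ (fun j _ =>
            integrable_of_bdd ((hXmeas j).sub_const t).exp (c := Real.exp N) fun ω => by
              rw [abs_of_nonneg (Real.exp_pos _).le]
              exact Real.exp_le_exp.mpr (by have := hXle j ω; linarith))]
          simp
      _ ≤ t + ∑ _j : Fin n, (n:ℝ)⁻¹ := by
          have := Finset.sum_le_sum (fun j (_ : j ∈ Finset.univ) => key j)
          linarith
      _ = t + 1 := by
          rw [Finset.sum_const]
          simp [mul_inv_cancel₀ (ne_of_gt hn0)]
  -- final arithmetic
  have hlog2 : Real.log (2 * n) = Real.log 2 + Real.log n :=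
    Real.log_mul (by norm_num) (ne_of_gt hn0)
  have hlog2' : (0.6931471803 : ℝ) < Real.log 2 := Real.log_two_gt_d9
  have hgoal : (∫ ω, ⨆ j : Fin n, X j ω) ≤ 3 * ((n:ℝ) * p + Real.log (2 * n)) := by
    rw [hlog2]
    have hnp : 0 ≤ (n:ℝ) * p := by positivity
    calc (∫ ω, ⨆ j : Fin n, X j ω) ≤ t + 1 := hmain
      _ ≤ 3 * ((n:ℝ) * p + (Real.log 2 + Real.log n)) := by rw [ht]; nlinarith
  exact hgoal

end Main
end
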